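/- arXiv:0707.1381 — 4 statements merged into one kernel-verified Lean document; each statement's English description precedes it below -/
import Mathlib

section
/- Let m ≥ 4. For every positive integer q, χ_{B_m}(2q) = χ_{D_m}(2q − 1); that is, the even constituent of the characteristic quasi-polynomial of B_m is obtained from the odd constituent of that of D_m by the shift q ↦ q − 1. -/
def phiB (q : ℕ) (a : ZMod (2*q)) : ZMod (2*q-1) := ((a.val + q - 1 : ℕ) : ZMod (2*q-1))

def psiB (q : ℕ) (b : ZMod (2*q-1)) : ZMod (2*q) :=
  ((if b.val < q then b.val + q else b.val + 1 - q : ℕ) : ZMod (2*q))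

lemma phiB_neg {q : ℕ} (hq : 0 < q) {a : ZMod (2*q)} (ha : a ≠ 0) :
    phiB q (-a) = - phiB q a := by
  haveI : NeZero (2*q) := ⟨by omega⟩
  have hv : a.val ≠ 0 := fun h => ha ((ZMod.val_eq_zero a).mp h)
  have hvlt : a.val < 2*q := ZMod.val_lt a
  rw [eq_neg_iff_add_eq_zero]
  unfold phiB
  rw [ZMod.neg_val, if_neg ha, ← Nat.cast_add, ZMod.natCast_eq_zero_iff]
  exact ⟨2, by omega⟩

lemma phiB_inj {q : ℕ} (hq : 0 < q) {a b : ZMod (2*q)} (ha : a ≠ 0) (hb : b ≠ 0)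
    (h : phiB q a = phiB q b) : a = b := by
  haveI : NeZero (2*q) := ⟨by omega⟩
  have hva : a.val ≠ 0 := fun h' => ha ((ZMod.val_eq_zero a).mp h')
  have hvb : b.val ≠ 0 := fun h' => hb ((ZMod.val_eq_zero b).mp h')
  have hvalt : a.val < 2*q := ZMod.val_lt a
  have hvblt : b.val < 2*q := ZMod.val_lt b
  have hmod : a.val + q - 1 ≡ b.val + q - 1 [MOD 2*q-1] :=
    (ZMod.natCast_eq_natCast_iff _ _ _).mp h
  have heq : a.val + q - 1 = b.val + q - 1 := by
    apply hmod.eq_of_abs_lt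
    have h1 : ((b.val + q - 1 : ℕ) : ℤ) = (b.val : ℤ) + q - 1 := by
      push_cast [Nat.cast_sub (by omega : 1 ≤ b.val + q)]; ring
    have h2 : ((a.val + q - 1 : ℕ) : ℤ) = (a.val : ℤ) + q - 1 := by
      push_cast [Nat.cast_sub (by omega : 1 ≤ a.val + q)]; ring
    rw [h1, h2]
    rw [abs_lt]
    constructor <;> omega
  have : a.val = b.val := by omega
  calc a = (a.val : ZMod (2*q)) := (ZMod.natCast_zmod_val a).symm
  _ = (b.val : ZMod (2*q)) := by rw [this]
  _ = b := ZMod.natCast_zmod_val b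

lemma psiB_ne {q : ℕ} (hq : 0 < q) (b : ZMod (2*q-1)) : psiB q b ≠ 0 := by
  haveI : NeZero (2*q) := ⟨by omega⟩
  haveI : NeZero (2*q-1) := ⟨by omega⟩
  have hb : b.val < 2*q-1 := ZMod.val_lt b
  unfold psiB
  intro h
  rw [ZMod.natCast_eq_zero_iff] at h
  rcases h with ⟨k, hk⟩
  have hk' : 2*q*k = 0 ∨ 2*q ≤ 2*q*k := by
    rcases Nat.eq_zero_or_pos k with h0 | h0
    · left; simp [h0]
    · right; exact Nat.le_mul_of_pos_right _ h0
  split_ifs at hk with h' <;> omega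

lemma phiB_psiB {q : ℕ} (hq : 0 < q) (b : ZMod (2*q-1)) : phiB q (psiB q b) = b := by
  haveI : NeZero (2*q) := ⟨by omega⟩
  haveI : NeZero (2*q-1) := ⟨by omega⟩
  have hb : b.val < 2*q-1 := ZMod.val_lt b
  unfold phiB psiB
  rw [ZMod.val_natCast_of_lt (by split_ifs with h' <;> omega)]
  split_ifs with h'
  · have : b.val + q + q - 1 = b.val + (2*q-1) := by omega
    rw [this, Nat.cast_add, ZMod.natCast_self, add_zero, ZMod.natCast_zmod_val]
  · have : b.val + 1 - q + q - 1 = b.val := by omega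
    rw [this, ZMod.natCast_zmod_val]

lemma cardB (m q : ℕ) (hq : 0 < q) :
    Nat.card {z : Fin m → ZMod (2 * q) //
        (∀ i, z i ≠ 0) ∧ ∀ i j : Fin m, i < j → z i ≠ z j ∧ z i + z j ≠ 0} =
      Nat.card {x : Fin m → ZMod (2 * q - 1) //
        ∀ i j : Fin m, i < j → x i ≠ x j ∧ x i + x j ≠ 0} := by
  have hcond : ∀ z : {z : Fin m → ZMod (2 * q) //
      (∀ i, z i ≠ 0) ∧ ∀ i j : Fin m, i < j → z i ≠ z j ∧ z i + z j ≠ 0},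
      ∀ i j : Fin m, i < j → phiB q (z.1 i) ≠ phiB q (z.1 j) ∧
        phiB q (z.1 i) + phiB q (z.1 j) ≠ 0 := by
    rintro ⟨z, hz0, hz⟩
    intro i j hij
    constructor
    · intro h
      exact (hz i j hij).1 (phiB_inj hq (hz0 i) (hz0 j) h)
    · intro h
      apply (hz i j hij).2
      have h1 : phiB q (z i) = phiB q (-(z j)) := by
        rw [phiB_neg hq (hz0 j), eq_neg_iff_add_eq_zero]; exact h
      have h2 : z i = - z j := phiB_inj hq (hz0 i) (neg_ne_zero.mpr (hz0 j)) h1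
      rw [h2]; ring
  apply Nat.card_eq_of_bijective (fun z => ⟨fun i => phiB q (z.1 i), hcond z⟩)
  constructor
  · -- injective
    rintro ⟨z, hz0, hz⟩ ⟨z', hz0', hz'⟩ h
    simp only [Subtype.mk.injEq] at h ⊢
    funext i
    exact phiB_inj hq (hz0 i) (hz0' i) (congrFun h i)
  · -- surjective
    rintro ⟨x, hx⟩
    refine ⟨⟨fun i => psiB q (x i), ?_, ?_⟩, ?_⟩
    · exact fun i => psiB_ne hq (x i)
    · intro i j hij
      dsimp only
      constructor
      · intro h
        exact (hx i j hij).1 (by rw [← phiB_psiB hq (x i), ← phiB_psiB hq (x j), h])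
      · intro h
        apply (hx i j hij).2
        have h1 : psiB q (x i) = - psiB q (x j) := by
          rw [eq_neg_iff_add_eq_zero]; exact h
        have h2 : x i = - x j := by
          rw [← phiB_psiB hq (x i), ← phiB_psiB hq (x j), h1,
            phiB_neg hq (psiB_ne hq (x j))]
        rw [h2]; ring
    · apply Subtype.ext
      funext i
      exact phiB_psiB hq (x i)

lemma sum_Ico_cons {m : ℕ} {R : Type*} [AddCommMonoid R] (f : Fin m → R)
    {a b c : Fin m} (hab : a ≤ b) (hbc : b ≤ c) :
    (∑ k ∈ Finset.Ico a b, f k) + ∑ k ∈ Finset.Ico b c, f k = ∑ k ∈ Finset.Ico a c, f k := by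
  have hab' := Fin.le_def.mp hab
  have hbc' := Fin.le_def.mp hbc
  have hu : Finset.Ico a b ∪ Finset.Ico b c = Finset.Ico a c := by
    ext k
    simp only [Finset.mem_union, Finset.mem_Ico, Fin.le_def, Fin.lt_def]
    omega
  rw [← hu]
  exact (Finset.sum_union (Finset.Ico_disjoint_Ico_consecutive a b c)).symm

lemma fin_Ico_singleton {m : ℕ} {a b : Fin m} (h : (a : ℕ) + 1 = (b : ℕ)) :
    Finset.Ico a b = {a} := by
  ext k
  simp only [Finset.mem_Ico, Finset.mem_singleton, Fin.lt_def, Fin.le_def, Fin.ext_iff]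
  omega

lemma two_q_one (q : ℕ) (hq : 0 < q) : (q : ZMod (2*q-1)) + q = 1 := by
  have h : (q : ZMod (2*q-1)) + q = ((q + q : ℕ) : ZMod (2*q-1)) := by push_cast; ring
  rw [h, (by omega : q + q = (2*q-1) + 1), Nat.cast_add, ZMod.natCast_self, zero_add,
    Nat.cast_one]

def toX (m q : ℕ) (hm : 4 ≤ m) (z : Fin m → ZMod (2*q-1)) (i : Fin m) : ZMod (2*q-1) :=
  (z ⟨m-1, by omega⟩ - z ⟨m-2, by omega⟩) * (q : ZMod (2*q-1)) +
    ∑ k ∈ Finset.Ico i ⟨m-1, by omega⟩, z k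

lemma toX_last (m q : ℕ) (hm : 4 ≤ m) (z : Fin m → ZMod (2*q-1)) (h : m-1 < m) :
    toX m q hm z ⟨m-1, h⟩ = (z ⟨m-1, by omega⟩ - z ⟨m-2, by omega⟩) * (q : ZMod (2*q-1)) := by
  simp [toX, Finset.Ico_self]

lemma toX_pen (m q : ℕ) (hm : 4 ≤ m) (z : Fin m → ZMod (2*q-1)) (h : m-2 < m) :
    toX m q hm z ⟨m-2, h⟩ = (z ⟨m-1, by omega⟩ - z ⟨m-2, by omega⟩) * (q : ZMod (2*q-1))
      + z ⟨m-2, by omega⟩ := by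
  unfold toX
  congr 1
  rw [fin_Ico_singleton (by show m-2+1 = m-1; omega), Finset.sum_singleton]

lemma sum_eq (m q : ℕ) (hm : 4 ≤ m) (z : Fin m → ZMod (2*q-1)) {i j : Fin m} (hij : i ≤ j) :
    ∑ k ∈ Finset.Ico i j, z k = toX m q hm z i - toX m q hm z j := by
  have hjl : j ≤ (⟨m-1, by omega⟩ : Fin m) := by
    have := j.isLt
    rw [Fin.le_def]
    show (j : ℕ) ≤ m - 1
    omega
  have h := sum_Ico_cons z hij hjl
  unfold toX
  linear_combination h

lemma toX_inj (m q : ℕ) (hm : 4 ≤ m) (hq : 0 < q) : Function.Injective (toX m q hm) := by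
  intro z z' h
  have key : ∀ w : Fin m → ZMod (2*q-1), ∀ i : Fin m, ∀ hi : (i : ℕ) < m-1,
      w i = toX m q hm w i - toX m q hm w ⟨(i : ℕ)+1, by omega⟩ := by
    intro w i hi
    rw [← sum_eq m q hm w (i := i) (j := ⟨(i : ℕ)+1, by omega⟩)
        (by rw [Fin.le_def]; show (i:ℕ) ≤ (i:ℕ)+1; omega),
      fin_Ico_singleton rfl, Finset.sum_singleton]
  have key2 : ∀ w : Fin m → ZMod (2*q-1),
      w ⟨m-1, by omega⟩ = toX m q hm w ⟨m-2, by omega⟩ + toX m q hm w ⟨m-1, by omega⟩ := by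
    intro w
    rw [toX_pen, toX_last]
    linear_combination (w ⟨m-2, by omega⟩ - w ⟨m-1, by omega⟩) * two_q_one q hq
  funext i
  by_cases hi : (i : ℕ) < m-1
  · rw [key z i hi, key z' i hi, h]
  · have hieq : i = ⟨m-1, by omega⟩ := Fin.ext (by have := i.isLt; show (i:ℕ) = m-1; omega)
    rw [hieq, key2 z, key2 z', h]

lemma cardD (m q : ℕ) (hm : 4 ≤ m) (hq : 0 < q) :
    Nat.card {z : Fin m → ZMod (2 * q - 1) //
        (∀ i j : Fin m, i < j → ∑ k ∈ Finset.Ico i j, z k ≠ 0) ∧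
        (∀ i : Fin m, (i : ℕ) < m - 1 →
          ∑ k ∈ Finset.Ico i ⟨m - 2, by omega⟩, z k + z ⟨m - 1, by omega⟩ ≠ 0) ∧
        (∀ i j : Fin m, i < j → (j : ℕ) < m - 1 →
          ∑ k ∈ Finset.Ico i j, z k + 2 * ∑ k ∈ Finset.Ico j ⟨m - 2, by omega⟩, z k +
            z ⟨m - 2, by omega⟩ + z ⟨m - 1, by omega⟩ ≠ 0)} =
      Nat.card {x : Fin m → ZMod (2 * q - 1) //
        ∀ i j : Fin m, i < j → x i ≠ x j ∧ x i + x j ≠ 0} := by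
  haveI : NeZero (2*q-1) := ⟨by omega⟩
  have E2 : ∀ z : Fin m → ZMod (2*q-1), ∀ i : Fin m, ∀ _ : (i : ℕ) < m-1,
      ∑ k ∈ Finset.Ico i (⟨m-2, by omega⟩ : Fin m), z k + z ⟨m-1, by omega⟩
        = toX m q hm z i + toX m q hm z ⟨m-1, by omega⟩ := by
    intro z i hi
    rw [sum_eq m q hm z (i := i) (j := ⟨m-2, by omega⟩)
        (by rw [Fin.le_def]; show (i:ℕ) ≤ m-2; omega),
      toX_pen, toX_last]
    linear_combination (z ⟨m-2, by omega⟩ - z ⟨m-1, by omega⟩) * two_q_one q hq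
  have E3 : ∀ z : Fin m → ZMod (2*q-1), ∀ i j : Fin m, ∀ _ : i < j, ∀ _ : (j : ℕ) < m-1,
      ∑ k ∈ Finset.Ico i j, z k + 2 * ∑ k ∈ Finset.Ico j (⟨m-2, by omega⟩ : Fin m), z k +
          z ⟨m-2, by omega⟩ + z ⟨m-1, by omega⟩ = toX m q hm z i + toX m q hm z j := by
    intro z i j hij hj
    rw [sum_eq m q hm z hij.le,
      sum_eq m q hm z (i := j) (j := ⟨m-2, by omega⟩)
        (by rw [Fin.le_def]; show (j:ℕ) ≤ m-2; omega),
      toX_pen]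
    linear_combination (z ⟨m-2, by omega⟩ - z ⟨m-1, by omega⟩) * two_q_one q hq
  have hiff : ∀ z : Fin m → ZMod (2*q-1),
      ((∀ i j : Fin m, i < j → ∑ k ∈ Finset.Ico i j, z k ≠ 0) ∧
        (∀ i : Fin m, (i : ℕ) < m - 1 →
          ∑ k ∈ Finset.Ico i ⟨m - 2, by omega⟩, z k + z ⟨m - 1, by omega⟩ ≠ 0) ∧
        (∀ i j : Fin m, i < j → (j : ℕ) < m - 1 →
          ∑ k ∈ Finset.Ico i j, z k + 2 * ∑ k ∈ Finset.Ico j ⟨m - 2, by omega⟩, z k +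
            z ⟨m - 2, by omega⟩ + z ⟨m - 1, by omega⟩ ≠ 0)) ↔
      (∀ i j : Fin m, i < j → toX m q hm z i ≠ toX m q hm z j ∧
        toX m q hm z i + toX m q hm z j ≠ 0) := by
    intro z
    constructor
    · rintro ⟨h1, h2, h3⟩ i j hij
      refine ⟨?_, ?_⟩
      · have h := h1 i j hij
        rw [sum_eq m q hm z hij.le] at h
        exact sub_ne_zero.mp h
      · by_cases hj : (j : ℕ) < m-1
        · have h := h3 i j hij hj
          rwa [E3 z i j hij hj] at h
        · have hjeq : j = ⟨m-1, by omega⟩ :=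
            Fin.ext (by have := j.isLt; show (j:ℕ) = m-1; omega)
          have hi' : (i : ℕ) < m-1 := by
            have h' := Fin.lt_def.mp hij; have := j.isLt; omega
          have h := h2 i hi'
          rw [E2 z i hi'] at h
          rwa [hjeq]
    · intro hx
      refine ⟨?_, ?_, ?_⟩
      · intro i j hij
        rw [sum_eq m q hm z hij.le]
        exact sub_ne_zero.mpr (hx i j hij).1
      · intro i hi
        rw [E2 z i hi]
        exact (hx i ⟨m-1, by omega⟩ (by rw [Fin.lt_def]; show (i:ℕ) < m-1; exact hi)).2
      · intro i j hij hj
        rw [E3 z i j hij hj]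
        exact (hx i j hij).2
  have hbij : Function.Bijective (toX m q hm) :=
    (Finite.injective_iff_bijective).mp (toX_inj m q hm hq)
  apply Nat.card_eq_of_bijective
    (fun z => ⟨toX m q hm z.1, fun i j hij => ((hiff z.1).mp z.2) i j hij⟩)
  constructor
  · rintro z z' hzz
    apply Subtype.ext
    exact toX_inj m q hm hq (congrArg Subtype.val hzz)
  · rintro ⟨x, hx⟩
    obtain ⟨z, hz⟩ := hbij.2 x
    refine ⟨⟨z, (hiff z).mpr ?_⟩, Subtype.ext hz⟩
    rw [hz]
    exact hx

/-- For `m ≥ 4` and every positive integer `q`, `χ_{B_m}(2q) = χ_{D_m}(2q − 1)`: the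
even constituent of the characteristic quasi-polynomial of `B_m` is obtained from the
odd constituent of that of `D_m` by the shift `q ↦ q − 1` (indices on the `D_m` side
are `0`-based, so `z ⟨m−2⟩`, `z ⟨m−1⟩` play the roles of `z_{m−1}`, `z_m`). -/
theorem stmt_14 (m : ℕ) (hm : 4 ≤ m) (q : ℕ) (hq : 0 < q) :
    Nat.card {z : Fin m → ZMod (2 * q) //
        (∀ i, z i ≠ 0) ∧ ∀ i j : Fin m, i < j → z i ≠ z j ∧ z i + z j ≠ 0} =
      Nat.card {z : Fin m → ZMod (2 * q - 1) //
        (∀ i j : Fin m, i < j → ∑ k ∈ Finset.Ico i j, z k ≠ 0) ∧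
        (∀ i : Fin m, (i : ℕ) < m - 1 →
          ∑ k ∈ Finset.Ico i ⟨m - 2, by omega⟩, z k + z ⟨m - 1, by omega⟩ ≠ 0) ∧
        (∀ i j : Fin m, i < j → (j : ℕ) < m - 1 →
          ∑ k ∈ Finset.Ico i j, z k + 2 * ∑ k ∈ Finset.Ico j ⟨m - 2, by omega⟩, z k +
            z ⟨m - 2, by omega⟩ + z ⟨m - 1, by omega⟩ ≠ 0)} :=
  (cardB m q hq).trans (cardD m q hm hq).symm
end

section
/- Let m ≥ 2. As formal power series in t, Σ_{q=1}^{∞} χ_{B_m}(q) t^q = 2^{m−1} · m! · t^{2m} / ((1 − t)² (1 − t²)^{m−1}). -/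
open Finset

section Counting

set_option linter.unusedSectionVars false

variable {q : ℕ} [NeZero q]

/-- the conditions defining χ_{B_m} -/
def QP {n : ℕ} (z : Fin n → ZMod q) : Prop :=
  (∀ i, z i ≠ 0) ∧ ∀ i j, i < j → z i ≠ z j ∧ z i + z j ≠ 0

/-- refined condition: also no 2-torsion values -/
def GP {n : ℕ} (z : Fin n → ZMod q) : Prop :=
  (∀ i, 2 * z i ≠ 0) ∧ ∀ i j, i < j → z i ≠ z j ∧ z i + z j ≠ 0

instance {n : ℕ} : DecidablePred (QP (q := q) (n := n)) := fun z => by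
  unfold QP; infer_instance

instance {n : ℕ} : DecidablePred (GP (q := q) (n := n)) := fun z => by
  unfold GP; infer_instance

lemma GP_imp_QP {n : ℕ} {z : Fin n → ZMod q} (h : GP z) : QP z :=
  ⟨fun i hi => h.1 i (by rw [hi, mul_zero]), h.2⟩

-- 2-torsion facts
lemma natCast_val_self (x : ZMod q) : ((x.val : ℕ) : ZMod q) = x := by
  rw [ZMod.natCast_val, ZMod.cast_id]

lemma two_mul_eq_zero_iff_val (x : ZMod q) : 2 * x = 0 ↔ (q : ℕ) ∣ 2 * x.val := by
  rw [← ZMod.natCast_eq_zero_iff]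
  push_cast
  rw [natCast_val_self]

lemma tors_val {x : ZMod q} (hx0 : x ≠ 0) (hx : 2 * x = 0) : 2 * x.val = q := by
  rw [two_mul_eq_zero_iff_val] at hx
  have h1 : x.val < q := ZMod.val_lt x
  have h3 : x.val ≠ 0 := fun h => hx0 ((ZMod.val_eq_zero x).1 h)
  exact Nat.eq_of_dvd_of_lt_two_mul (by omega) hx (by omega)

lemma two_mul_ne_zero_of_odd (hq : Odd q) (x : ZMod q) (hx : x ≠ 0) : 2 * x ≠ 0 := by
  intro h
  have := tors_val hx h
  obtain ⟨r, hr⟩ := hq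
  omega

lemma tors_unique {x y : ZMod q} (hx : 2 * x = 0) (hy : 2 * y = 0)
    (hx0 : x ≠ 0) (hy0 : y ≠ 0) : x = y := by
  have h1 := tors_val hx0 hx
  have h2 := tors_val hy0 hy
  have : x.val = y.val := by omega
  rw [← natCast_val_self x, ← natCast_val_self y, this]

/-- The forbidden set for extending a `QP` tuple. -/
def Fq {n : ℕ} (w : Fin n → ZMod q) : Finset (ZMod q) :=
  insert 0 ((image w univ) ∪ (image (fun i => -(w i)) univ))

/-- The forbidden set for extending a `GP` tuple. -/
def Fg {n : ℕ} (w : Fin n → ZMod q) : Finset (ZMod q) :=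
  (univ.filter (fun x : ZMod q => 2 * x = 0)) ∪ ((image w univ) ∪ (image (fun i => -(w i)) univ))

lemma not_mem_Fq_iff {n : ℕ} (w : Fin n → ZMod q) (a : ZMod q) :
    a ∉ Fq w ↔ a ≠ 0 ∧ ∀ i, w i ≠ a ∧ w i + a ≠ 0 := by
  simp only [Fq, mem_insert, mem_union, mem_image, mem_univ, true_and, not_or, not_exists]
  constructor
  · rintro ⟨h0, h1, h2⟩
    exact ⟨h0, fun i => ⟨fun h => h1 i h, fun h => h2 i (by linear_combination -h)⟩⟩
  · rintro ⟨h0, h⟩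
    exact ⟨h0, fun i hi => (h i).1 hi, fun i hi => (h i).2 (by linear_combination -hi)⟩

lemma not_mem_Fg_iff {n : ℕ} (w : Fin n → ZMod q) (a : ZMod q) :
    a ∉ Fg w ↔ 2 * a ≠ 0 ∧ ∀ i, w i ≠ a ∧ w i + a ≠ 0 := by
  simp only [Fg, mem_union, mem_filter, mem_univ, true_and, mem_image, not_or, not_exists]
  constructor
  · rintro ⟨h0, h1, h2⟩
    exact ⟨h0, fun i => ⟨fun h => h1 i h, fun h => h2 i (by linear_combination -h)⟩⟩
  · rintro ⟨h0, h⟩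
    exact ⟨h0, fun i hi => (h i).1 hi, fun i hi => (h i).2 (by linear_combination -hi)⟩

lemma QP_snoc_iff {n : ℕ} (w : Fin n → ZMod q) (a : ZMod q) :
    QP (Fin.snoc w a) ↔ QP w ∧ a ∉ Fq w := by
  rw [not_mem_Fq_iff]
  constructor
  · rintro ⟨h1, h2⟩
    refine ⟨⟨fun i => ?_, fun i j hij => ?_⟩, ?_, fun i => ?_⟩
    · have := h1 i.castSucc; rwa [Fin.snoc_castSucc] at this
    · have := h2 i.castSucc j.castSucc (by simpa using hij)
      rwa [Fin.snoc_castSucc, Fin.snoc_castSucc] at this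
    · have := h1 (Fin.last n); rwa [Fin.snoc_last] at this
    · have := h2 i.castSucc (Fin.last n) (Fin.castSucc_lt_last i)
      rwa [Fin.snoc_castSucc, Fin.snoc_last] at this
  · rintro ⟨⟨h1, h2⟩, h0, h3⟩
    constructor
    · intro i
      refine Fin.lastCases ?_ ?_ i
      · rw [Fin.snoc_last]; exact h0
      · intro k; rw [Fin.snoc_castSucc]; exact h1 k
    · intro i j
      refine Fin.lastCases ?_ ?_ j
      · refine Fin.lastCases ?_ ?_ i
        · intro h; exact absurd h (lt_irrefl _)
        · intro k _
          rw [Fin.snoc_castSucc, Fin.snoc_last]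
          exact h3 k
      · intro k
        refine Fin.lastCases ?_ ?_ i
        · intro hk
          exact absurd (lt_trans hk (Fin.castSucc_lt_last k)) (lt_irrefl _)
        · intro l hl
          rw [Fin.snoc_castSucc, Fin.snoc_castSucc]
          exact h2 l k (by simpa using hl)

lemma GP_snoc_iff {n : ℕ} (w : Fin n → ZMod q) (a : ZMod q) :
    GP (Fin.snoc w a) ↔ GP w ∧ a ∉ Fg w := by
  rw [not_mem_Fg_iff]
  constructor
  · rintro ⟨h1, h2⟩
    refine ⟨⟨fun i => ?_, fun i j hij => ?_⟩, ?_, fun i => ?_⟩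
    · have := h1 i.castSucc; rwa [Fin.snoc_castSucc] at this
    · have := h2 i.castSucc j.castSucc (by simpa using hij)
      rwa [Fin.snoc_castSucc, Fin.snoc_castSucc] at this
    · have := h1 (Fin.last n); rwa [Fin.snoc_last] at this
    · have := h2 i.castSucc (Fin.last n) (Fin.castSucc_lt_last i)
      rwa [Fin.snoc_castSucc, Fin.snoc_last] at this
  · rintro ⟨⟨h1, h2⟩, h0, h3⟩
    constructor
    · intro i
      refine Fin.lastCases ?_ ?_ i
      · rw [Fin.snoc_last]; exact h0
      · intro k; rw [Fin.snoc_castSucc]; exact h1 k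
    · intro i j
      refine Fin.lastCases ?_ ?_ j
      · refine Fin.lastCases ?_ ?_ i
        · intro h; exact absurd h (lt_irrefl _)
        · intro k _
          rw [Fin.snoc_castSucc, Fin.snoc_last]
          exact h3 k
      · intro k
        refine Fin.lastCases ?_ ?_ i
        · intro hk
          exact absurd (lt_trans hk (Fin.castSucc_lt_last k)) (lt_irrefl _)
        · intro l hl
          rw [Fin.snoc_castSucc, Fin.snoc_castSucc]
          exact h2 l k (by simpa using hl)


lemma QP_inj {n : ℕ} {w : Fin n → ZMod q} (h : QP w) : Function.Injective w := by
  intro i j hij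
  by_contra hne
  rcases lt_or_gt_of_ne hne with h' | h'
  · exact (h.2 i j h').1 hij
  · exact (h.2 j i h').1 hij.symm

lemma card_image_w {n : ℕ} {w : Fin n → ZMod q} (h : QP w) :
    (image w univ).card = n := by
  rw [Finset.card_image_of_injective _ (QP_inj h), card_univ, Fintype.card_fin]

lemma card_image_neg_w {n : ℕ} {w : Fin n → ZMod q} (h : QP w) :
    (image (fun i => -(w i)) univ).card = n := by
  have hinj : Function.Injective (fun i => -(w i) : Fin n → ZMod q) :=
    fun i j hij => QP_inj h (neg_injective hij)
  rw [Finset.card_image_of_injective _ hinj, card_univ, Fintype.card_fin]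

lemma zero_not_mem_union {n : ℕ} {w : Fin n → ZMod q} (h : QP w) :
    (0 : ZMod q) ∉ (image w univ) ∪ (image (fun i => -(w i)) univ) := by
  simp only [mem_union, mem_image, mem_univ, true_and, not_or, not_exists]
  exact ⟨fun i hi => h.1 i hi, fun i hi => h.1 i (by linear_combination -hi)⟩

lemma inter_empty_of_GP {n : ℕ} {w : Fin n → ZMod q} (h : GP w) :
    (image w univ) ∩ (image (fun i => -(w i)) univ) = ∅ := by
  ext x
  simp only [mem_inter, mem_image, mem_univ, true_and, notMem_empty, iff_false, not_and,
    not_exists, forall_exists_index]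
  rintro i rfl j hj
  rcases lt_trichotomy i j with h' | rfl | h'
  · exact (h.2 i j h').2 (by linear_combination -hj)
  · exact h.1 i (by linear_combination -hj)
  · exact (h.2 j i h').2 (by linear_combination -hj)

lemma card_Fq_of_GP {n : ℕ} {w : Fin n → ZMod q} (h : GP w) :
    (Fq w).card = 2 * n + 1 := by
  have hQ := GP_imp_QP h
  rw [Fq, Finset.card_insert_of_notMem (zero_not_mem_union hQ),
    Finset.card_union_of_disjoint (Finset.disjoint_iff_inter_eq_empty.2 (inter_empty_of_GP h)),
    card_image_w hQ, card_image_neg_w hQ]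
  omega

lemma card_Fg_of_GP {n : ℕ} {w : Fin n → ZMod q} (h : GP w) :
    (Fg w).card = (univ.filter (fun x : ZMod q => 2 * x = 0)).card + 2 * n := by
  have hQ := GP_imp_QP h
  rw [Fg, Finset.card_union_of_disjoint, Finset.card_union_of_disjoint
    (Finset.disjoint_iff_inter_eq_empty.2 (inter_empty_of_GP h)),
    card_image_w hQ, card_image_neg_w hQ]
  · omega
  · rw [Finset.disjoint_left]
    intro x hx hmem
    rw [mem_filter] at hx
    rw [mem_union] at hmem
    rcases hmem with hm | hm <;> rw [mem_image] at hm <;> obtain ⟨i, -, rfl⟩ := hm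
    · exact h.1 i hx.2
    · exact h.1 i (by linear_combination -hx.2)

lemma card_Fq_of_QP_not_GP {n : ℕ} {w : Fin n → ZMod q} (hq : QP w) (hg : ¬ GP w) :
    (Fq w).card = 2 * n := by
  have hex : ∃ i, 2 * w i = 0 := by
    by_contra hc
    push_neg at hc
    exact hg ⟨hc, hq.2⟩
  obtain ⟨i₀, hi₀⟩ := hex
  have hinter : (image w univ) ∩ (image (fun i => -(w i)) univ) = {w i₀} := by
    ext x
    simp only [mem_inter, mem_image, mem_univ, true_and, mem_singleton]
    constructor
    · rintro ⟨⟨i, rfl⟩, ⟨j, hj⟩⟩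
      rcases lt_trichotomy i j with h' | rfl | h'
      · exact absurd (by linear_combination -hj) (hq.2 i j h').2
      · exact tors_unique (by linear_combination -hj) hi₀ (hq.1 i) (hq.1 i₀)
      · exact absurd (by linear_combination -hj) (hq.2 j i h').2
    · rintro rfl
      exact ⟨⟨i₀, rfl⟩, ⟨i₀, by linear_combination -hi₀⟩⟩
  have hcu := Finset.card_union_add_card_inter (image w univ) (image (fun i => -(w i)) univ)
  rw [hinter, Finset.card_singleton, card_image_w hq, card_image_neg_w hq] at hcu
  have hn : 1 ≤ n := by
    rcases Nat.eq_zero_or_pos n with rfl | hn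
    · exact i₀.elim0
    · exact hn
  rw [Fq, Finset.card_insert_of_notMem (zero_not_mem_union hq)]
  omega

lemma card_allowed (F : Finset (ZMod q)) :
    Fintype.card {a : ZMod q // a ∉ F} = q - F.card := by
  classical
  rw [Fintype.card_subtype]
  have : univ.filter (fun a : ZMod q => a ∉ F) = Fᶜ := by
    ext a; simp [Finset.mem_compl]
  rw [this, Finset.card_compl, ZMod.card]

lemma card_step {n : ℕ} (T : (Fin (n+1) → ZMod q) → Prop) [DecidablePred T] :
    Fintype.card {z : Fin (n+1) → ZMod q // T z} =
      ∑ w : Fin n → ZMod q, Fintype.card {a : ZMod q // T (Fin.snoc w a)} := by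
  let E : ((Fin n → ZMod q) × ZMod q) ≃ (Fin (n+1) → ZMod q) :=
    (Equiv.prodComm _ _).trans (Fin.snocEquiv fun _ => ZMod q)
  have hE : ∀ p : (Fin n → ZMod q) × ZMod q, E p = Fin.snoc p.1 p.2 := fun p => by
    ext i; rfl
  have e1 : {p : (Fin n → ZMod q) × ZMod q // T (Fin.snoc p.1 p.2)} ≃
      {z : Fin (n+1) → ZMod q // T z} :=
    Equiv.subtypeEquiv E (fun p => by rw [hE])
  have e2 : {p : (Fin n → ZMod q) × ZMod q // T (Fin.snoc p.1 p.2)} ≃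
      Σ w : Fin n → ZMod q, {a : ZMod q // T (Fin.snoc w a)} :=
    Equiv.subtypeProdEquivSigmaSubtype (fun (w : Fin n → ZMod q) (a : ZMod q) =>
      T (Fin.snoc w a))
  rw [Fintype.card_congr (e1.symm.trans e2), Fintype.card_sigma]


lemma GP_card (n : ℕ) :
    Fintype.card {z : Fin n → ZMod q // GP z} =
      ∏ j ∈ Finset.range n, (q - ((univ.filter (fun x : ZMod q => 2 * x = 0)).card + 2 * j)) := by
  induction n with
  | zero =>
    rw [Finset.prod_range_zero, Fintype.card_subtype]
    have h : ∀ z : Fin 0 → ZMod q, GP z := fun z => ⟨fun i => i.elim0, fun i => i.elim0⟩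
    rw [Finset.filter_true_of_mem (fun z _ => h z), Finset.card_univ]
    simp
  | succ n ih =>
    rw [card_step, Finset.prod_range_succ, ← ih]
    have hsum : ∀ w : Fin n → ZMod q, Fintype.card {a : ZMod q // GP (Fin.snoc w a)} =
        if GP w then q - ((univ.filter (fun x : ZMod q => 2 * x = 0)).card + 2 * n) else 0 := by
      intro w
      by_cases hw : GP w
      · rw [if_pos hw]
        have e : {a : ZMod q // GP (Fin.snoc w a)} ≃ {a : ZMod q // a ∉ Fg w} :=
          Equiv.subtypeEquivRight (fun a => by rw [GP_snoc_iff]; tauto)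
        rw [Fintype.card_congr e, card_allowed, card_Fg_of_GP hw]
      · rw [if_neg hw, Fintype.card_eq_zero_iff]
        exact ⟨fun a => hw ((GP_snoc_iff w a.1).1 a.2).1⟩
    rw [Finset.sum_congr rfl (fun w _ => hsum w), ← Finset.sum_filter,
      Finset.sum_const, smul_eq_mul, ← Fintype.card_subtype]

lemma QP_card_split (n : ℕ) :
    Fintype.card {z : Fin n → ZMod q // QP z} =
      Fintype.card {z : Fin n → ZMod q // GP z} +
      Fintype.card {z : Fin n → ZMod q // QP z ∧ ¬ GP z} := by
  rw [Fintype.card_subtype, Fintype.card_subtype, Fintype.card_subtype,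
    ← Finset.card_union_of_disjoint]
  · congr 1
    ext z
    simp only [mem_union, mem_filter, mem_univ, true_and]
    constructor
    · intro hz
      by_cases hg : GP z
      · exact Or.inl hg
      · exact Or.inr ⟨hz, hg⟩
    · rintro (hg | ⟨hz, -⟩)
      · exact GP_imp_QP hg
      · exact hz
  · rw [Finset.disjoint_left]
    intro z hz hz2
    rw [mem_filter] at hz hz2
    exact hz2.2.2 hz.2

lemma QP_card_step (n : ℕ) :
    Fintype.card {z : Fin (n+1) → ZMod q // QP z} =
      (q - (2*n+1)) * Fintype.card {z : Fin n → ZMod q // GP z} +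
      (q - 2*n) * Fintype.card {z : Fin n → ZMod q // QP z ∧ ¬ GP z} := by
  rw [card_step]
  have hsum : ∀ w : Fin n → ZMod q, Fintype.card {a : ZMod q // QP (Fin.snoc w a)} =
      (if GP w then q - (2*n+1) else 0) + (if QP w ∧ ¬ GP w then q - 2*n else 0) := by
    intro w
    by_cases hg : GP w
    · rw [if_pos hg, if_neg (fun h => h.2 hg), add_zero]
      have e : {a : ZMod q // QP (Fin.snoc w a)} ≃ {a : ZMod q // a ∉ Fq w} :=
        Equiv.subtypeEquivRight (fun a => by
          rw [QP_snoc_iff]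
          have := GP_imp_QP hg
          tauto)
      rw [Fintype.card_congr e, card_allowed, card_Fq_of_GP hg]
    · rw [if_neg hg, zero_add]
      by_cases hq' : QP w
      · rw [if_pos ⟨hq', hg⟩]
        have e : {a : ZMod q // QP (Fin.snoc w a)} ≃ {a : ZMod q // a ∉ Fq w} :=
          Equiv.subtypeEquivRight (fun a => by rw [QP_snoc_iff]; tauto)
        rw [Fintype.card_congr e, card_allowed, card_Fq_of_QP_not_GP hq' hg]
      · rw [if_neg (fun h : QP w ∧ ¬ GP w => hq' h.1), Fintype.card_eq_zero_iff]
        exact ⟨fun a => hq' ((QP_snoc_iff w a.1).1 a.2).1⟩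
  rw [Finset.sum_congr rfl (fun w _ => hsum w), Finset.sum_add_distrib,
    ← Finset.sum_filter, ← Finset.sum_filter, Finset.sum_const, Finset.sum_const,
    smul_eq_mul, smul_eq_mul, ← Fintype.card_subtype, ← Fintype.card_subtype]
  ring

lemma Zt_card_odd (hq : Odd q) :
    (univ.filter (fun x : ZMod q => 2 * x = 0)).card = 1 := by
  have : (univ.filter (fun x : ZMod q => 2 * x = 0)) = {0} := by
    ext x
    simp only [mem_filter, mem_univ, true_and, mem_singleton]
    constructor
    · intro hx
      by_contra hne
      exact two_mul_ne_zero_of_odd hq x hne hx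
    · rintro rfl
      rw [mul_zero]
  rw [this, Finset.card_singleton]

lemma Zt_card_even (hq : Even q) :
    (univ.filter (fun x : ZMod q => 2 * x = 0)).card = 2 := by
  have hq2 : 2 ≤ q := by
    have := NeZero.ne q
    obtain ⟨r, hr⟩ := hq
    omega
  set e : ZMod q := ((q / 2 : ℕ) : ZMod q) with he
  have heval : e.val = q / 2 := ZMod.val_cast_of_lt (by omega)
  have he0 : e ≠ 0 := by
    intro h
    rw [← ZMod.val_eq_zero, heval] at h
    omega
  have he2 : 2 * e = 0 := by
    have : ((2 * (q / 2) : ℕ) : ZMod q) = ((q : ℕ) : ZMod q) := by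
      congr 1
      obtain ⟨r, hr⟩ := hq
      omega
    rw [he]
    push_cast at this ⊢
    rw [this, ZMod.natCast_self]
  have : (univ.filter (fun x : ZMod q => 2 * x = 0)) = {0, e} := by
    ext x
    simp only [mem_filter, mem_univ, true_and, mem_insert, mem_singleton]
    constructor
    · intro hx
      by_cases hx0 : x = 0
      · exact Or.inl hx0
      · exact Or.inr (tors_unique hx he2 hx0 he0)
    · rintro (rfl | rfl)
      · rw [mul_zero]
      · exact he2
  rw [this, Finset.card_insert_of_notMem (by simpa using (Ne.symm he0)), Finset.card_singleton]


lemma QP_card_odd (hq : Odd q) (n : ℕ) :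
    Fintype.card {z : Fin n → ZMod q // QP z} =
      2^n * n.factorial * ((q/2).choose n) := by
  have e : {z : Fin n → ZMod q // QP z} ≃ {z : Fin n → ZMod q // GP z} :=
    Equiv.subtypeEquivRight (fun z =>
      ⟨fun h => ⟨fun i => two_mul_ne_zero_of_odd hq _ (h.1 i), h.2⟩, GP_imp_QP⟩)
  rw [Fintype.card_congr e, GP_card, Zt_card_odd hq]
  obtain ⟨r, hr⟩ := hq
  have hc : ∀ j ∈ Finset.range n, q - (1 + 2*j) = 2 * ((q/2) - j) := fun j _ => by omega
  rw [Finset.prod_congr rfl hc, Finset.prod_mul_distrib, Finset.prod_const, card_range,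
    ← Nat.descFactorial_eq_prod_range, Nat.descFactorial_eq_factorial_mul_choose]
  ring

lemma GP_card_even (hq : Even q) (n : ℕ) :
    Fintype.card {z : Fin n → ZMod q // GP z} =
      2^n * n.factorial * ((q/2 - 1).choose n) := by
  rw [GP_card, Zt_card_even hq]
  obtain ⟨r, hr⟩ := hq
  have hc : ∀ j ∈ Finset.range n, q - (2 + 2*j) = 2 * ((q/2 - 1) - j) := fun j _ => by omega
  rw [Finset.prod_congr rfl hc, Finset.prod_mul_distrib, Finset.prod_const, card_range,
    ← Nat.descFactorial_eq_prod_range, Nat.descFactorial_eq_factorial_mul_choose]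
  ring

lemma card_QP0_notGP0 :
    Fintype.card {z : Fin 0 → ZMod q // QP z ∧ ¬ GP z} = 0 := by
  rw [Fintype.card_eq_zero_iff]
  exact ⟨fun z => z.2.2 ⟨fun i => i.elim0, fun i => i.elim0⟩⟩

lemma card_GP0 : Fintype.card {z : Fin 0 → ZMod q // GP z} = 1 := by
  have := GP_card (q := q) 0
  simpa using this

lemma QP_card_even_aux (hq : Even q) (k : ℕ) (hqk : q = 2 * k) (n : ℕ) (hn : 1 ≤ n) :
    Fintype.card {z : Fin n → ZMod q // QP z} =
      2^(n-1) * n.factorial * (k.choose n + (k - 1).choose n) ∧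
    Fintype.card {z : Fin n → ZMod q // QP z ∧ ¬ GP z} =
      2^(n-1) * n.factorial * ((k - 1).choose (n-1)) := by
  have hq2 : 2 ≤ q := by
    have := NeZero.ne q
    omega
  have hdiv : q / 2 - 1 = k - 1 := by omega
  have hk1 : 1 ≤ k := by omega
  induction n, hn using Nat.le_induction with
  | base =>
    have hstep := QP_card_step (q := q) 0
    rw [card_GP0, card_QP0_notGP0] at hstep
    have ha1 : Fintype.card {z : Fin 1 → ZMod q // QP z} = q - 1 := by
      rw [hstep]; omega
    have hb1 : Fintype.card {z : Fin 1 → ZMod q // GP z} = 2 * (k - 1) := by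
      rw [GP_card_even hq 1, hdiv]
      simp [Nat.choose_one_right]
    have hsplit := QP_card_split (q := q) 1
    constructor
    · rw [ha1]
      simp [Nat.choose_one_right]
      omega
    · rw [ha1, hb1] at hsplit
      norm_num
      omega
  | succ n hn1 ih =>
    obtain ⟨iha, ihe⟩ := ih
    have hb := GP_card_even hq n
    rw [hdiv] at hb
    have hstep := QP_card_step (q := q) n
    rw [hb, ihe] at hstep
    have hbsucc := GP_card_even hq (n+1)
    rw [hdiv] at hbsucc
    have hsplit := QP_card_split (q := q) (n+1)
    have hpasc : k.choose (n+1) = (k - 1).choose n + (k - 1).choose (n+1) := by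
      conv_lhs => rw [show k = (k-1)+1 by omega]
      rw [Nat.choose_succ_succ]
    have ha : Fintype.card {z : Fin (n+1) → ZMod q // QP z} =
        2^n * (n+1).factorial * (k.choose (n+1) + (k-1).choose (n+1)) := by
      rcases Nat.lt_or_ge n k with hlt | hge
      · -- k ≥ n + 1
        rw [hstep]
        have h2n1 : 2*n+1 ≤ q := by omega
        have h2n : 2*n ≤ q := by omega
        refine (Nat.cast_inj (R := ℤ)).mp ?_
        push_cast [Nat.cast_sub h2n1, Nat.cast_sub h2n]
        have h1 : ((k.choose (n+1) : ℤ)) * ((n : ℤ)+1) = (k.choose n : ℤ) * ((k : ℤ) - n) := by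
          have h := Nat.choose_succ_right_eq k n
          have h' : ((k.choose (n+1) * (n+1) : ℕ) : ℤ) = ((k.choose n * (k - n) : ℕ) : ℤ) := by
            exact_mod_cast h
          push_cast [Nat.cast_sub hlt.le] at h'
          linarith
        have h2 : (((k-1).choose (n+1) : ℤ)) * ((n : ℤ)+1) =
            ((k-1).choose n : ℤ) * ((k : ℤ) - 1 - n) := by
          have h := Nat.choose_succ_right_eq (k-1) n
          have h' : (((k-1).choose (n+1) * (n+1) : ℕ) : ℤ) =
              (((k-1).choose n * (k - 1 - n) : ℕ) : ℤ) := by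
            exact_mod_cast h
          push_cast [Nat.cast_sub (show n ≤ k - 1 by omega),
            Nat.cast_sub (show 1 ≤ k by omega)] at h'
          linarith
        have h3 : ((k.choose n : ℤ)) = ((k-1).choose (n-1) : ℤ) + ((k-1).choose n : ℤ) := by
          have hh := Nat.choose_succ_succ (k-1) (n-1)
          simp only [Nat.succ_eq_add_one] at hh
          rw [show k - 1 + 1 = k by omega, show n - 1 + 1 = n by omega] at hh
          exact_mod_cast hh
        have hqZ : (q : ℤ) = 2 * (k : ℤ) := by exact_mod_cast hqk
        have hs : (2:ℤ)^n = 2 * 2^(n-1) := by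
          rw [← pow_succ']
          congr 1
          omega
        have hfac : ((n+1).factorial : ℤ) = ((n : ℤ)+1) * (n.factorial : ℤ) := by
          rw [Nat.factorial_succ]; push_cast; ring
        rw [hqZ, hs, hfac]
        apply mul_left_cancel₀ (show ((n:ℤ)+1) ≠ 0 by positivity)
        linear_combination (-(2 * (2:ℤ)^(n-1) * (n.factorial : ℤ) * ((n:ℤ)+1))) * h1 +
          (-(2 * (2:ℤ)^(n-1) * (n.factorial : ℤ) * ((n:ℤ)+1))) * h2 +
          (-(2 * (2:ℤ)^(n-1) * (n.factorial : ℤ) * ((n:ℤ)+1) * ((k:ℤ) - (n:ℤ)))) * h3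
      · -- k ≤ n : everything is 0
        have hz1 : (k-1).choose n = 0 := Nat.choose_eq_zero_of_lt (by omega)
        have hz2 : q - 2*n = 0 := by omega
        have hz3 : k.choose (n+1) = 0 := Nat.choose_eq_zero_of_lt (by omega)
        have hz4 : (k-1).choose (n+1) = 0 := Nat.choose_eq_zero_of_lt (by omega)
        rw [hstep, hz1, hz2, hz3, hz4]
        simp
    refine ⟨ha, ?_⟩
    rw [ha, hbsucc] at hsplit
    have hkey : 2^n * (n+1).factorial * (k.choose (n+1) + (k-1).choose (n+1)) =
        2^(n+1) * (n+1).factorial * ((k-1).choose (n+1)) +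
        2^n * (n+1).factorial * ((k-1).choose n) := by
      rw [hpasc]
      ring
    rw [hkey] at hsplit
    simp only [Nat.add_sub_cancel]
    omega

end Counting

theorem count_main (m : ℕ) (hm : 1 ≤ m) (q : ℕ) [NeZero q] :
    Nat.card {z : Fin m → ZMod q //
      (∀ i, z i ≠ 0) ∧ ∀ i j : Fin m, i < j → z i ≠ z j ∧ z i + z j ≠ 0} =
    if Even q then 2^(m-1) * m.factorial * ((q/2).choose m + (q/2 - 1).choose m)
    else 2^m * m.factorial * ((q/2).choose m) := by
  rw [Nat.card_eq_fintype_card]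
  have hcongr : Fintype.card {z : Fin m → ZMod q //
      (∀ i, z i ≠ 0) ∧ ∀ i j : Fin m, i < j → z i ≠ z j ∧ z i + z j ≠ 0} =
      Fintype.card {z : Fin m → ZMod q // QP z} :=
    Fintype.card_congr (Equiv.subtypeEquivRight (fun z => Iff.rfl))
  rw [hcongr]
  by_cases hq : Even q
  · rw [if_pos hq]
    have hqk : q = 2 * (q / 2) := (Nat.mul_div_cancel' hq.two_dvd).symm
    have := QP_card_even_aux (q := q) hq (q/2) hqk m hm
    exact this.1
  · rw [if_neg hq]
    exact QP_card_odd ((Nat.even_or_odd q).resolve_left hq) m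



section Series

open PowerSeries

noncomputable def Dser (m : ℕ) : PowerSeries ℤ :=
  PowerSeries.mk fun n => if Even n then ((n/2 + m).choose m : ℤ) else 0

lemma Dser_mul_one_sub (m : ℕ) : Dser (m+1) * (1 - X^2) = Dser m := by
  ext n
  rw [mul_sub, mul_one, map_sub, coeff_mul_X_pow']
  rcases Nat.lt_or_ge n 2 with h | h
  · interval_cases n <;> simp [Dser, Nat.even_iff]
  · rw [if_pos h]
    simp only [Dser, coeff_mk]
    have hpar : Even (n - 2) ↔ Even n := by
      rw [Nat.even_sub h]; simp
    by_cases he : Even n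
    · simp only [if_pos he, if_pos (hpar.2 he)]
      have h2 : (n-2)/2 = n/2 - 1 := by omega
      have h4 : n/2 + (m+1) = (n/2 + m) + 1 := by omega
      have h5 : n/2 - 1 + (m+1) = n/2 + m := by omega
      rw [h2, h4, h5, Nat.choose_succ_succ]
      push_cast; ring
    · simp only [if_neg he, if_neg (fun hc => he (hpar.1 hc))]; ring
lemma Dser_zero_mul : Dser 0 * (1 - X^2) = 1 := by
  ext n
  rw [mul_sub, mul_one, map_sub, coeff_mul_X_pow', coeff_one]
  rcases Nat.lt_or_ge n 2 with h | h
  · interval_cases n <;> simp [Dser, Nat.even_iff]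
  · rw [if_pos h, if_neg (by omega : ¬ n = 0)]
    have hpar : Even (n - 2) ↔ Even n := by rw [Nat.even_sub h]; simp
    simp only [Dser, coeff_mk, Nat.choose_zero_right]
    by_cases he : Even n
    · simp only [if_pos he, if_pos (hpar.2 he)]; ring
    · simp only [if_neg he, if_neg (fun hc => he (hpar.1 hc))]; ring

lemma Dser_mul (m : ℕ) : Dser m * (1 - X^2)^(m+1) = 1 := by
  induction m with
  | zero => simpa using Dser_zero_mul
  | succ k ih =>
    have : Dser (k+1) * (1 - X^2)^(k+2) = (Dser (k+1) * (1 - X^2)) * (1-X^2)^(k+1) := by ring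
    rw [this, Dser_mul_one_sub, ih]

lemma coeff_E (m n : ℕ) :
    (PowerSeries.coeff (R := ℤ) n) (X^(2*m) * Dser m) = if Even n then ((n/2).choose m : ℤ) else 0 := by
  rw [coeff_X_pow_mul']
  rcases Nat.lt_or_ge n (2*m) with h | h
  · rw [if_neg (by omega)]
    by_cases he : Even n
    · rw [if_pos he, Nat.choose_eq_zero_of_lt (by omega)]; simp
    · rw [if_neg he]
  · rw [if_pos (by omega)]
    simp only [Dser, coeff_mk]
    have hpar : Even (n - 2*m) ↔ Even n := by rw [Nat.even_sub h]; simp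
    by_cases he : Even n
    · rw [if_pos he, if_pos (hpar.2 he)]
      congr 2
      omega
    · rw [if_neg he, if_neg (fun hc => he (hpar.1 hc))]


lemma coeff_sq_mul (phi : PowerSeries ℤ) (n : ℕ) :
    (PowerSeries.coeff (R := ℤ) n) ((1 + X)^2 * phi) =
      (PowerSeries.coeff (R := ℤ) n) phi
      + (if 1 ≤ n then (PowerSeries.coeff (R := ℤ) (n-1)) phi else 0)
      + (if 1 ≤ n then (PowerSeries.coeff (R := ℤ) (n-1)) phi else 0)
      + (if 2 ≤ n then (PowerSeries.coeff (R := ℤ) (n-2)) phi else 0) := by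
  have hexp : ((1 + X : ℤ⟦X⟧))^2 * phi = phi + X^1 * phi + X^1 * phi + X^2 * phi := by ring
  rw [hexp, map_add, map_add, map_add, coeff_X_pow_mul', coeff_X_pow_mul']


noncomputable def fser (m : ℕ) : PowerSeries ℤ :=
  PowerSeries.mk fun n =>
    if Even n then (2^(m-1) * m.factorial * ((n/2).choose m + (n/2-1).choose m) : ℤ)
    else (2^m * m.factorial * ((n/2).choose m) : ℤ)

lemma fser_eq (m : ℕ) (hm : 2 ≤ m) :
    fser m = PowerSeries.C (R := ℤ) (2^(m-1) * (m.factorial : ℤ)) *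
      ((1 + X)^2 * (X^(2*m) * Dser m)) := by
  ext n
  rw [PowerSeries.coeff_C_mul, coeff_sq_mul, coeff_E]
  simp only [fser, coeff_mk]
  have hm1 : m - 1 + 1 = m := by omega
  by_cases he : Even n
  · rw [if_pos he]
    rcases Nat.eq_zero_or_pos n with rfl | hn
    · simp [Nat.choose_eq_zero_of_lt (by omega : 0 < m)]
    · have h2 : 2 ≤ n := by
        rcases he with ⟨r, hr⟩; omega
      have hodd : ¬ Even (n-1) := by rw [Nat.even_sub (by omega : 1 ≤ n)]; simpa
      rw [if_pos (by omega : 1 ≤ n), if_pos h2, coeff_E, coeff_E, if_neg hodd]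
      simp only [if_pos he, if_pos (show Even (n-2) by rw [Nat.even_sub h2]; simpa using he)]
      have hd : (n-2)/2 = n/2 - 1 := by omega
      rw [hd]
      push_cast
      ring
  · rw [if_neg he]
    have hn1 : 1 ≤ n := by
      rcases Nat.eq_zero_or_pos n with rfl | hn
      · exact absurd Even.zero he
      · exact hn
    have hev : Even (n-1) := by rw [Nat.even_sub hn1]; simpa using (Nat.even_or_odd n).resolve_left he
    have hd : (n-1)/2 = n/2 := by
      rcases hev with ⟨r, hr⟩; omega
    rw [if_pos hn1, coeff_E, if_pos hev, hd]
    simp only [if_neg he]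
    by_cases h2 : 2 ≤ n
    · have hodd2 : ¬ Even (n-2) := by rw [Nat.even_sub h2]; simpa using (Nat.even_or_odd n).resolve_left he
      rw [if_pos h2, coeff_E, if_neg hodd2]
      rw [← hm1, pow_succ]
      push_cast
      ring
    · rw [if_neg h2]
      rw [← hm1, pow_succ]
      push_cast
      ring

lemma fser_id (m : ℕ) (hm : 2 ≤ m) :
    fser m * ((1 - X) ^ 2 * (1 - X ^ 2) ^ (m - 1)) =
      PowerSeries.C (R := ℤ) (2 ^ (m - 1) * (m.factorial : ℤ)) * X ^ (2 * m) := by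
  rw [fser_eq m hm]
  have key : ((1 + X : ℤ⟦X⟧)^2 * (1-X)^2) * (1 - X^2)^(m-1) = (1 - X^2)^(m+1) := by
    have h1 : ((1 + X : ℤ⟦X⟧)^2 * (1-X)^2) = (1 - X^2)^2 := by ring
    rw [h1, ← pow_add]
    congr 1
    omega
  calc PowerSeries.C (R := ℤ) (2^(m-1) * (m.factorial : ℤ)) * ((1 + X)^2 * (X^(2*m) * Dser m)) *
        ((1 - X) ^ 2 * (1 - X ^ 2) ^ (m - 1))
      = PowerSeries.C (R := ℤ) (2^(m-1) * (m.factorial : ℤ)) * X^(2*m) *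
          (Dser m * (((1 + X)^2 * (1-X)^2) * (1 - X^2)^(m-1))) := by ring
    _ = _ := by rw [key, Dser_mul, mul_one]

open PowerSeries in
/-- The generating function of the characteristic quasi-polynomial of `B_m`:
`Σ_{q≥1} χ_{B_m}(q) t^q = 2^{m−1} m! t^{2m} / ((1 − t)² (1 − t²)^{m−1})`, stated here
with denominators cleared, as an identity of formal power series over `ℤ`. -/
theorem stmt_15 (m : ℕ) (hm : 2 ≤ m) :
    (PowerSeries.mk fun q =>
        if q = 0 then 0 else
          (Nat.card {z : Fin m → ZMod q //
            (∀ i, z i ≠ 0) ∧ ∀ i j : Fin m, i < j → z i ≠ z j ∧ z i + z j ≠ 0} : ℤ)) *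
        ((1 - PowerSeries.X) ^ 2 * (1 - PowerSeries.X ^ 2) ^ (m - 1)) =
      (PowerSeries.C (R := ℤ)) (2 ^ (m - 1) * (Nat.factorial m : ℤ)) * PowerSeries.X ^ (2 * m) := by
  have hmk : (PowerSeries.mk fun q =>
      if q = 0 then 0 else
        (Nat.card {z : Fin m → ZMod q //
          (∀ i, z i ≠ 0) ∧ ∀ i j : Fin m, i < j → z i ≠ z j ∧ z i + z j ≠ 0} : ℤ)) =
      fser m := by
    ext n
    rw [PowerSeries.coeff_mk]
    simp only [fser, PowerSeries.coeff_mk]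
    rcases Nat.eq_zero_or_pos n with rfl | hn
    · rw [if_pos rfl, if_pos Even.zero]
      simp [Nat.choose_eq_zero_of_lt (show 0 < m by omega)]
    · rw [if_neg (by omega)]
      haveI : NeZero n := ⟨by omega⟩
      rw [count_main m (by omega) n]
      by_cases he : Even n
      · simp only [if_pos he]
        push_cast
        ring
      · simp only [if_neg he]
        push_cast
        ring
  rw [hmk]
  exact fser_id m hm

end Series
end

section
/- Let q be a positive integer and let χ_{M_4}(q) be the number of z = (z_1, z_2, z_3, z_4) ∈ (ℤ/qℤ)^4 such that z_i ≠ z_j for all 1 ≤ i < j ≤ 4 and z_1 + z_2 ≠ z_3 + z_4, z_1 + z_3 ≠ z_2 + z_4, z_1 + z_4 ≠ z_2 + z_3. Then χ_{M_4}(q) = q(q−1)(q−3)(q−5) if q is odd, and χ_{M_4}(q) = q(q−2)(q−3)(q−4) if q is even. -/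
open Finset

abbrev Qp (q : ℕ) (t : (ZMod q × ZMod q) × ZMod q) : Prop :=
  t.1.1 ≠ 0 ∧ t.1.2 ≠ 0 ∧ t.2 ≠ 0 ∧ t.1.1 ≠ t.1.2 ∧ t.1.1 ≠ t.2 ∧ t.1.2 ≠ t.2 ∧
  t.1.1 ≠ t.1.2 + t.2 ∧ t.1.2 ≠ t.1.1 + t.2 ∧ t.2 ≠ t.1.1 + t.1.2

def myEquiv (q : ℕ) : (Fin 4 → ZMod q) ≃ ZMod q × ((ZMod q × ZMod q) × ZMod q) where
  toFun z := (z 0, ((z 1 - z 0, z 2 - z 0), z 3 - z 0))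
  invFun w := ![w.1, w.1 + w.2.1.1, w.1 + w.2.1.2, w.1 + w.2.2]
  left_inv z := by funext i; fin_cases i <;> simp
  right_inv w := by simp

lemma pairwise_iff (q : ℕ) (z : Fin 4 → ZMod q) :
    (∀ i j : Fin 4, i < j → z i ≠ z j) ↔
      (z 0 ≠ z 1 ∧ z 0 ≠ z 2 ∧ z 0 ≠ z 3 ∧ z 1 ≠ z 2 ∧ z 1 ≠ z 3 ∧ z 2 ≠ z 3) := by
  constructor
  · intro h
    exact ⟨h 0 1 (by decide), h 0 2 (by decide), h 0 3 (by decide),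
      h 1 2 (by decide), h 1 3 (by decide), h 2 3 (by decide)⟩
  · rintro ⟨h1,h2,h3,h4,h5,h6⟩ i j hij
    fin_cases i <;> fin_cases j <;> simp_all <;> omega

lemma head_reduce (q : ℕ) [NeZero q] :
    Nat.card {z : Fin 4 → ZMod q //
        (∀ i j : Fin 4, i < j → z i ≠ z j) ∧
        z 0 + z 1 ≠ z 2 + z 3 ∧ z 0 + z 2 ≠ z 1 + z 3 ∧ z 0 + z 3 ≠ z 1 + z 2} =
      q * (univ.filter (Qp q)).card := by
  have key : ∀ z : Fin 4 → ZMod q,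
      ((∀ i j : Fin 4, i < j → z i ≠ z j) ∧
        z 0 + z 1 ≠ z 2 + z 3 ∧ z 0 + z 2 ≠ z 1 + z 3 ∧ z 0 + z 3 ≠ z 1 + z 2)
      ↔ Qp q ((myEquiv q z).2) := by
    intro z
    rw [pairwise_iff]
    simp only [myEquiv, Equiv.coe_fn_mk, Qp]
    constructor
    · rintro ⟨⟨a1,a2,a3,a4,a5,a6⟩,b1,b2,b3⟩
      refine ⟨?_,?_,?_,?_,?_,?_,?_,?_,?_⟩ <;> intro h <;>
        [exact a1 (by linear_combination -h); exact a2 (by linear_combination -h);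
         exact a3 (by linear_combination -h); exact a4 (by linear_combination h);
         exact a5 (by linear_combination h); exact a6 (by linear_combination h);
         exact b1 (by linear_combination h); exact b2 (by linear_combination h);
         exact b3 (by linear_combination h)]
    · rintro ⟨a1,a2,a3,a4,a5,a6,b1,b2,b3⟩
      refine ⟨⟨?_,?_,?_,?_,?_,?_⟩,?_,?_,?_⟩ <;> intro h <;>
        [exact a1 (by linear_combination -h); exact a2 (by linear_combination -h);
         exact a3 (by linear_combination -h); exact a4 (by linear_combination h);
         exact a5 (by linear_combination h); exact a6 (by linear_combination h);
         exact b1 (by linear_combination h); exact b2 (by linear_combination h);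
         exact b3 (by linear_combination h)]
  have e1 : {z : Fin 4 → ZMod q //
        (∀ i j : Fin 4, i < j → z i ≠ z j) ∧
        z 0 + z 1 ≠ z 2 + z 3 ∧ z 0 + z 2 ≠ z 1 + z 3 ∧ z 0 + z 3 ≠ z 1 + z 2}
      ≃ {w : ZMod q × ((ZMod q × ZMod q) × ZMod q) // Qp q w.2} :=
    (Equiv.subtypeEquiv (myEquiv q) (fun z => key z))
  have e2 : {w : ZMod q × ((ZMod q × ZMod q) × ZMod q) // Qp q w.2}
      ≃ ZMod q × {t : (ZMod q × ZMod q) × ZMod q // Qp q t} :=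
    ⟨fun w => (w.1.1, ⟨w.1.2, w.2⟩), fun p => ⟨(p.1, p.2.1), p.2.2⟩,
     fun w => rfl, fun p => rfl⟩
  rw [Nat.card_congr (e1.trans e2), Nat.card_prod, Nat.card_zmod,
    Nat.card_eq_fintype_card, Fintype.card_subtype]

variable {q : ℕ} [NeZero q]

abbrev PF (q : ℕ) [NeZero q] : Finset (ZMod q × ZMod q) :=
  univ.filter (fun p => p.1 ≠ 0 ∧ p.2 ≠ 0 ∧ p.1 ≠ p.2)

lemma card_compl_pair {x y : ZMod q} (h : x ≠ y) :
    ((univ : Finset (ZMod q)) \ {x, y}).card = q - 2 := by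
  rw [card_sdiff_of_subset (subset_univ _), card_univ, ZMod.card, card_pair h]

lemma mk_inj (a : ZMod q) : Function.Injective (fun b => ((a, b) : ZMod q × ZMod q)) := by
  intro x y h; exact congrArg Prod.snd h

lemma card_PF : (PF q).card = (q - 1) * (q - 2) := by
  have hrep : PF q = (univ.erase (0 : ZMod q)).biUnion
      (fun a => ((univ : Finset (ZMod q)) \ {0, a}).image (fun b => (a, b))) := by
    ext ⟨a, b⟩
    simp only [PF, mem_filter, mem_univ, true_and, mem_biUnion, mem_erase, mem_image,
      mem_sdiff, mem_insert, mem_singleton]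
    constructor
    · rintro ⟨ha, hb, hab⟩
      exact ⟨a, by tauto, b, by tauto, rfl⟩
    · rintro ⟨a', ha', b', hb', heq⟩
      cases heq
      simp_all
      tauto
  rw [hrep, card_biUnion]
  · have h2 : ∀ a ∈ univ.erase (0 : ZMod q),
        (((univ : Finset (ZMod q)) \ {0, a}).image (fun b => (a, b))).card = q - 2 := by
      intro a ha
      rw [card_image_of_injective _ (mk_inj a), card_compl_pair (Ne.symm (mem_erase.mp ha).1)]
    rw [sum_congr rfl h2, sum_const, card_erase_of_mem (mem_univ _), card_univ, ZMod.card,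
      smul_eq_mul]
  · intro x hx y hy hxy
    simp only [disjoint_left, mem_image]
    rintro ⟨a, b⟩ ⟨b1, hb1, h1⟩ ⟨b2, hb2, h2⟩
    cases h1; cases h2; exact hxy rfl

abbrev tors (q : ℕ) [NeZero q] : Finset (ZMod q) :=
  univ.filter (fun x => x ≠ 0 ∧ x + x ≠ 0)

lemma n1_card : ((PF q).filter (fun p => p.1 + p.2 = 0)).card = (tors q).card := by
  have hrep : (PF q).filter (fun p => p.1 + p.2 = 0)
      = (tors q).image (fun a => (a, -a)) := by
    ext ⟨a, b⟩
    simp only [PF, tors, mem_filter, mem_image, mem_univ, true_and]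
    constructor
    · rintro ⟨⟨ha, hb, hab⟩, hsum⟩
      refine ⟨a, ⟨ha, fun h2 => hab (by linear_combination h2 - hsum)⟩, ?_⟩
      have : b = -a := by linear_combination hsum
      rw [this]
    · rintro ⟨x, ⟨hx, hx2⟩, heq⟩
      injection heq with h1 h2
      subst h1; subst h2
      refine ⟨⟨hx, fun h => hx (by linear_combination -h), fun h => hx2 (by linear_combination h)⟩, by ring⟩
  rw [hrep, card_image_of_injective _ (fun x y h => congrArg Prod.fst h)]

lemma n5_card : ((PF q).filter (fun p => p.2 = p.1 + p.1)).card = (tors q).card := by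
  have hrep : (PF q).filter (fun p => p.2 = p.1 + p.1)
      = (tors q).image (fun a => (a, a + a)) := by
    ext ⟨a, b⟩
    simp only [PF, tors, mem_filter, mem_image, mem_univ, true_and]
    constructor
    · rintro ⟨⟨ha, hb, hab⟩, hsum⟩
      refine ⟨a, ⟨ha, fun h2 => hb (by linear_combination hsum + h2)⟩, ?_⟩
      rw [← hsum]
    · rintro ⟨x, ⟨hx, hx2⟩, heq⟩
      injection heq with h1 h2
      subst h1; subst h2
      exact ⟨⟨hx, hx2, fun h => hx (by linear_combination -h)⟩, rfl⟩
  rw [hrep, card_image_of_injective _ (fun x y h => congrArg Prod.fst h)]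

lemma na2b_card : ((PF q).filter (fun p => p.1 = p.2 + p.2)).card = (tors q).card := by
  have hrep : (PF q).filter (fun p => p.1 = p.2 + p.2)
      = (tors q).image (fun b => (b + b, b)) := by
    ext ⟨a, b⟩
    simp only [PF, tors, mem_filter, mem_image, mem_univ, true_and]
    constructor
    · rintro ⟨⟨ha, hb, hab⟩, hsum⟩
      refine ⟨b, ⟨hb, fun h2 => ha (by linear_combination hsum + h2)⟩, ?_⟩
      rw [← hsum]
    · rintro ⟨x, ⟨hx, hx2⟩, heq⟩
      injection heq with h1 h2
      subst h1; subst h2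
      exact ⟨⟨hx2, hx, fun h => hx (by linear_combination h)⟩, rfl⟩
  rw [hrep, card_image_of_injective _ (fun x y h => congrArg Prod.snd h)]

lemma tt_val {x : ZMod q} (hx : x + x = 0) (hx0 : x ≠ 0) : x.val + x.val = q := by
  have h1 : (x.val + x.val) % q = 0 := by
    have := ZMod.val_add x x
    rw [hx] at this
    simpa using this.symm
  obtain ⟨k, hk⟩ := Nat.dvd_of_mod_eq_zero h1
  have h2 : x.val < q := ZMod.val_lt x
  have h3 : x.val ≠ 0 := by simpa [ZMod.val_eq_zero] using hx0
  rcases Nat.lt_or_ge k 2 with h | h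
  · interval_cases k <;> omega
  · nlinarith

lemma tt_unique {x y : ZMod q} (hx : x + x = 0) (hy : y + y = 0)
    (hx0 : x ≠ 0) (hy0 : y ≠ 0) : x = y := by
  apply ZMod.val_injective
  have := tt_val hx hx0; have := tt_val hy hy0; omega

lemma tt_odd (hq : q % 2 = 1) {x : ZMod q} (hx : x + x = 0) : x = 0 := by
  by_contra h
  have := tt_val hx h
  omega

def ee (q : ℕ) : ZMod q := ((q / 2 : ℕ) : ZMod q)

lemma ee_self (hq : q % 2 = 0) : (ee q : ZMod q) + ee q = 0 := by
  have h : (ee q : ZMod q) + ee q = ((q/2 + q/2 : ℕ) : ZMod q) := by push_cast [ee]; ring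
  have h2 : q/2 + q/2 = q := by omega
  rw [h, h2, ZMod.natCast_self]

lemma ee_ne (hq : q % 2 = 0) : (ee q : ZMod q) ≠ 0 := by
  have hq1 : 0 < q := Nat.pos_of_ne_zero (NeZero.ne q)
  intro h
  rw [← ZMod.val_eq_zero, ee, ZMod.val_natCast] at h
  have h2 : q / 2 < q := by omega
  rw [Nat.mod_eq_of_lt h2] at h
  omega

lemma tors_card_odd (hq : q % 2 = 1) : (tors q).card = q - 1 := by
  have hrep : tors q = univ.erase (0 : ZMod q) := by
    ext x
    simp only [tors, mem_filter, mem_univ, true_and, mem_erase, and_true]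
    exact ⟨fun h => h.1, fun h => ⟨h, fun h2 => h (tt_odd hq h2)⟩⟩
  rw [hrep, card_erase_of_mem (mem_univ _), card_univ, ZMod.card]

lemma n2b0_odd (hq : q % 2 = 1) :
    ((PF q).filter (fun p => p.2 + p.2 = 0)).card = 0 := by
  rw [card_eq_zero, eq_empty_iff_forall_notMem]
  rintro ⟨a, b⟩ h
  simp only [PF, mem_filter, mem_univ, true_and] at h
  exact h.1.2.1 (tt_odd hq h.2)

lemma na20_odd (hq : q % 2 = 1) :
    ((PF q).filter (fun p => p.1 + p.1 = 0)).card = 0 := by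
  rw [card_eq_zero, eq_empty_iff_forall_notMem]
  rintro ⟨a, b⟩ h
  simp only [PF, mem_filter, mem_univ, true_and] at h
  exact h.1.1 (tt_odd hq h.2)

lemma neq_odd (hq : q % 2 = 1) :
    ((PF q).filter (fun p => p.1 + p.1 = p.2 + p.2)).card = 0 := by
  rw [card_eq_zero, eq_empty_iff_forall_notMem]
  rintro ⟨a, b⟩ h
  simp only [PF, mem_filter, mem_univ, true_and] at h
  have := tt_odd hq (x := a - b) (by linear_combination h.2)
  exact h.1.2.2 (by linear_combination this)

lemma tors_card_even (hq : q % 2 = 0) : (tors q).card = q - 2 := by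
  have hrep : tors q = univ \ {0, ee q} := by
    ext x
    simp only [tors, mem_filter, mem_univ, true_and, mem_sdiff, mem_insert, mem_singleton,
      not_or]
    constructor
    · rintro ⟨h1, h2⟩
      exact ⟨h1, fun h => h2 (h ▸ ee_self hq)⟩
    · rintro ⟨h1, h2⟩
      exact ⟨h1, fun h2' => h2 (tt_unique h2' (ee_self hq) h1 (ee_ne hq))⟩
  rw [hrep, card_compl_pair (Ne.symm (ee_ne hq))]

lemma n2b0_even (hq : q % 2 = 0) :
    ((PF q).filter (fun p => p.2 + p.2 = 0)).card = q - 2 := by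
  have hrep : (PF q).filter (fun p => p.2 + p.2 = 0)
      = (univ \ {0, ee q}).image (fun a => (a, ee q)) := by
    ext ⟨a, b⟩
    simp only [PF, mem_filter, mem_univ, true_and, mem_image, mem_sdiff, mem_insert,
      mem_singleton, not_or]
    constructor
    · rintro ⟨⟨ha, hb, hab⟩, h2⟩
      have hbe : b = ee q := tt_unique h2 (ee_self hq) hb (ee_ne hq)
      subst hbe
      exact ⟨a, ⟨ha, hab⟩, rfl⟩
    · rintro ⟨x, hx, heq⟩
      injection heq with h1 h2
      subst h1; subst h2
      exact ⟨⟨hx.1, ee_ne hq, hx.2⟩, ee_self hq⟩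
  rw [hrep, card_image_of_injective _ (fun x y h => congrArg Prod.fst h),
    card_compl_pair (Ne.symm (ee_ne hq))]

lemma na20_even (hq : q % 2 = 0) :
    ((PF q).filter (fun p => p.1 + p.1 = 0)).card = q - 2 := by
  have hrep : (PF q).filter (fun p => p.1 + p.1 = 0)
      = (univ \ {0, ee q}).image (fun b => (ee q, b)) := by
    ext ⟨a, b⟩
    simp only [PF, mem_filter, mem_univ, true_and, mem_image, mem_sdiff, mem_insert,
      mem_singleton, not_or]
    constructor
    · rintro ⟨⟨ha, hb, hab⟩, h2⟩
      have hae : a = ee q := tt_unique h2 (ee_self hq) ha (ee_ne hq)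
      subst hae
      exact ⟨b, ⟨hb, fun h => hab h.symm⟩, rfl⟩
    · rintro ⟨x, hx, heq⟩
      injection heq with h1 h2
      subst h1; subst h2
      exact ⟨⟨ee_ne hq, hx.1, fun h => hx.2 h.symm⟩, ee_self hq⟩
  rw [hrep, card_image_of_injective _ (fun x y h => congrArg Prod.snd h),
    card_compl_pair (Ne.symm (ee_ne hq))]

lemma neq_even (hq : q % 2 = 0) :
    ((PF q).filter (fun p => p.1 + p.1 = p.2 + p.2)).card = q - 2 := by
  have hrep : (PF q).filter (fun p => p.1 + p.1 = p.2 + p.2)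
      = (univ \ {0, ee q}).image (fun a => (a, a + ee q)) := by
    ext ⟨a, b⟩
    simp only [PF, mem_filter, mem_univ, true_and, mem_image, mem_sdiff, mem_insert,
      mem_singleton, not_or]
    constructor
    · rintro ⟨⟨ha, hb, hab⟩, h2⟩
      have hd : b - a = ee q := by
        refine tt_unique (by linear_combination -h2) (ee_self hq)
          (fun h' => hab (by linear_combination -h')) (ee_ne hq)
      have hbe : b = a + ee q := by linear_combination hd
      subst hbe
      refine ⟨a, ⟨ha, fun h => hb ?_⟩, rfl⟩
      rw [h]; exact ee_self hq
    · rintro ⟨x, hx, heq⟩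
      injection heq with h1 h2
      subst h1; subst h2
      refine ⟨⟨hx.1, ?_, ?_⟩, by linear_combination -(ee_self hq)⟩
      · intro h
        exact hx.2 (by linear_combination h - ee_self hq)
      · intro h
        exact ee_ne hq (by linear_combination -h)
  rw [hrep, card_image_of_injective _ (fun x y h => congrArg Prod.fst h),
    card_compl_pair (Ne.symm (ee_ne hq))]

omit [NeZero q] in
lemma keysplit {a b c : ZMod q} :
    (c = 0 ∨ c = a ∨ c = b ∨ a = b + c ∨ b = a + c ∨ c = a + b)
    ↔ (c = 0 ∨ c = a ∨ c = b ∨ (c = a + b ∧ a + b ≠ 0)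
       ∨ (b = a + c ∧ b ≠ a + a ∧ a + a ≠ 0)
       ∨ (a = b + c ∧ a ≠ b + b ∧ b + b ≠ 0 ∧ a + a ≠ b + b)) := by
  have case4 : c = a + b → (c = 0 ∨ c = a ∨ c = b ∨ (c = a + b ∧ a + b ≠ 0)
       ∨ (b = a + c ∧ b ≠ a + a ∧ a + a ≠ 0)
       ∨ (a = b + c ∧ a ≠ b + b ∧ b + b ≠ 0 ∧ a + a ≠ b + b)) := by
    intro h4
    by_cases hz : a + b = 0
    · exact Or.inl (by rw [h4, hz])
    · exact Or.inr (Or.inr (Or.inr (Or.inl ⟨h4, hz⟩)))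
  have case5 : b = a + c → (c = 0 ∨ c = a ∨ c = b ∨ (c = a + b ∧ a + b ≠ 0)
       ∨ (b = a + c ∧ b ≠ a + a ∧ a + a ≠ 0)
       ∨ (a = b + c ∧ a ≠ b + b ∧ b + b ≠ 0 ∧ a + a ≠ b + b)) := by
    intro h5
    by_cases h5a : b = a + a
    · exact Or.inr (Or.inl (by linear_combination h5a - h5))
    · by_cases h5b : a + a = 0
      · exact case4 (by linear_combination -h5 - h5b)
      · exact Or.inr (Or.inr (Or.inr (Or.inr (Or.inl ⟨h5, h5a, h5b⟩))))
  constructor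
  · rintro (h | h | h | h | h | h)
    · exact Or.inl h
    · exact Or.inr (Or.inl h)
    · exact Or.inr (Or.inr (Or.inl h))
    · -- a = b + c
      by_cases h6a : a = b + b
      · exact Or.inr (Or.inr (Or.inl (by linear_combination h6a - h)))
      · by_cases h6b : b + b = 0
        · exact case4 (by linear_combination -h - h6b)
        · by_cases h6c : a + a = b + b
          · apply case5
            linear_combination h - h6c
          · exact Or.inr (Or.inr (Or.inr (Or.inr (Or.inr ⟨h, h6a, h6b, h6c⟩))))
    · exact case5 h
    · exact case4 h
  · rintro (h | h | h | ⟨h, -⟩ | ⟨h, -⟩ | ⟨h, -⟩)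
    · exact Or.inl h
    · exact Or.inr (Or.inl h)
    · exact Or.inr (Or.inr (Or.inl h))
    · exact Or.inr (Or.inr (Or.inr (Or.inr (Or.inr h))))
    · exact Or.inr (Or.inr (Or.inr (Or.inr (Or.inl h))))
    · exact Or.inr (Or.inr (Or.inr (Or.inl h)))

abbrev BB (q : ℕ) [NeZero q] : Finset ((ZMod q × ZMod q) × ZMod q) :=
  (PF q) ×ˢ (univ : Finset (ZMod q))

abbrev cCond (q : ℕ) (t : (ZMod q × ZMod q) × ZMod q) : Prop :=
  t.2 ≠ 0 ∧ t.2 ≠ t.1.1 ∧ t.2 ≠ t.1.2 ∧ t.1.1 ≠ t.1.2 + t.2 ∧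
    t.1.2 ≠ t.1.1 + t.2 ∧ t.2 ≠ t.1.1 + t.1.2

abbrev d1 (q : ℕ) (t : (ZMod q × ZMod q) × ZMod q) : Prop := t.2 = 0
abbrev d2 (q : ℕ) (t : (ZMod q × ZMod q) × ZMod q) : Prop := t.2 = t.1.1
abbrev d3 (q : ℕ) (t : (ZMod q × ZMod q) × ZMod q) : Prop := t.2 = t.1.2
abbrev d4 (q : ℕ) (t : (ZMod q × ZMod q) × ZMod q) : Prop :=
  t.2 = t.1.1 + t.1.2 ∧ t.1.1 + t.1.2 ≠ 0
abbrev d5 (q : ℕ) (t : (ZMod q × ZMod q) × ZMod q) : Prop :=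
  t.1.2 = t.1.1 + t.2 ∧ t.1.2 ≠ t.1.1 + t.1.1 ∧ t.1.1 + t.1.1 ≠ 0
abbrev d6 (q : ℕ) (t : (ZMod q × ZMod q) × ZMod q) : Prop :=
  t.1.1 = t.1.2 + t.2 ∧ t.1.1 ≠ t.1.2 + t.1.2 ∧ t.1.2 + t.1.2 ≠ 0 ∧
    t.1.1 + t.1.1 ≠ t.1.2 + t.1.2

lemma notc (t : (ZMod q × ZMod q) × ZMod q) :
    ¬ cCond q t ↔ (d1 q t ∨ d2 q t ∨ d3 q t ∨ d4 q t ∨ d5 q t ∨ d6 q t) := by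
  obtain ⟨⟨a, b⟩, c⟩ := t
  simp only [cCond, d1, d2, d3, d4, d5, d6, not_and_or, not_not, ne_eq]
  constructor
  · intro h
    have h' : c = 0 ∨ c = a ∨ c = b ∨ a = b + c ∨ b = a + c ∨ c = a + b := by tauto
    exact (keysplit (a := a) (b := b) (c := c)).mp h'
  · intro h
    have h' := (keysplit (a := a) (b := b) (c := c)).mpr h
    tauto

lemma memBB {t : (ZMod q × ZMod q) × ZMod q} :
    t ∈ BB q ↔ t.1.1 ≠ 0 ∧ t.1.2 ≠ 0 ∧ t.1.1 ≠ t.1.2 := by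
  simp [BB, PF, mem_product]

lemma U1_card : ((BB q).filter (d1 q)).card = (PF q).card := by
  have hrep : (BB q).filter (d1 q) = (PF q).image (fun p => (p, (0 : ZMod q))) := by
    ext ⟨⟨a, b⟩, c⟩
    simp only [d1, mem_filter, mem_image, BB, mem_product, mem_univ, and_true]
    constructor
    · rintro ⟨hp, rfl⟩
      exact ⟨(a, b), hp, rfl⟩
    · rintro ⟨p, hp, heq⟩
      injection heq with h1 h2
      subst h1; subst h2
      exact ⟨hp, rfl⟩
  rw [hrep, card_image_of_injective _ (fun x y h => congrArg Prod.fst h)]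

lemma U2_card : ((BB q).filter (d2 q)).card = (PF q).card := by
  have hrep : (BB q).filter (d2 q) = (PF q).image (fun p => (p, p.1)) := by
    ext ⟨⟨a, b⟩, c⟩
    simp only [d2, mem_filter, mem_image, BB, mem_product, mem_univ, and_true]
    constructor
    · rintro ⟨hp, h⟩
      exact ⟨(a, b), hp, by rw [h]⟩
    · rintro ⟨p, hp, heq⟩
      injection heq with h1 h2
      subst h1; subst h2
      exact ⟨hp, rfl⟩
  rw [hrep, card_image_of_injective _ (fun x y h => congrArg Prod.fst h)]

lemma U3_card : ((BB q).filter (d3 q)).card = (PF q).card := by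
  have hrep : (BB q).filter (d3 q) = (PF q).image (fun p => (p, p.2)) := by
    ext ⟨⟨a, b⟩, c⟩
    simp only [d3, mem_filter, mem_image, BB, mem_product, mem_univ, and_true]
    constructor
    · rintro ⟨hp, h⟩
      exact ⟨(a, b), hp, by rw [h]⟩
    · rintro ⟨p, hp, heq⟩
      injection heq with h1 h2
      subst h1; subst h2
      exact ⟨hp, rfl⟩
  rw [hrep, card_image_of_injective _ (fun x y h => congrArg Prod.fst h)]

lemma U4_card : ((BB q).filter (d4 q)).card
    = ((PF q).filter (fun p => ¬(p.1 + p.2 = 0))).card := by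
  have hrep : (BB q).filter (d4 q)
      = ((PF q).filter (fun p => ¬(p.1 + p.2 = 0))).image (fun p => (p, p.1 + p.2)) := by
    ext ⟨⟨a, b⟩, c⟩
    simp only [d4, mem_filter, mem_image, BB, mem_product, mem_univ, and_true]
    constructor
    · rintro ⟨hp, h, hz⟩
      exact ⟨(a, b), ⟨hp, hz⟩, by rw [h]⟩
    · rintro ⟨p, ⟨hp, hz⟩, heq⟩
      injection heq with h1 h2
      subst h1; subst h2
      exact ⟨hp, rfl, hz⟩
  rw [hrep, card_image_of_injective _ (fun x y h => congrArg Prod.fst h)]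

lemma U5_card : ((BB q).filter (d5 q)).card
    = ((PF q).filter (fun p => ¬(p.2 = p.1 + p.1 ∨ p.1 + p.1 = 0))).card := by
  have hrep : (BB q).filter (d5 q)
      = ((PF q).filter (fun p => ¬(p.2 = p.1 + p.1 ∨ p.1 + p.1 = 0))).image
          (fun p => (p, p.2 - p.1)) := by
    ext ⟨⟨a, b⟩, c⟩
    simp only [d5, mem_filter, mem_image, BB, mem_product, mem_univ, and_true, not_or]
    constructor
    · rintro ⟨hp, h1, h2, h3⟩
      refine ⟨(a, b), ⟨hp, h2, h3⟩, ?_⟩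
      have : b - a = c := by linear_combination h1
      rw [this]
    · rintro ⟨p, ⟨hp, h2, h3⟩, heq⟩
      injection heq with h1 hc
      subst h1; subst hc
      exact ⟨hp, by ring, h2, h3⟩
  rw [hrep, card_image_of_injective _ (fun x y h => congrArg Prod.fst h)]

lemma U6_card : ((BB q).filter (d6 q)).card
    = ((PF q).filter (fun p =>
        ¬(p.1 = p.2 + p.2 ∨ p.2 + p.2 = 0 ∨ p.1 + p.1 = p.2 + p.2))).card := by
  have hrep : (BB q).filter (d6 q)
      = ((PF q).filter (fun p =>
          ¬(p.1 = p.2 + p.2 ∨ p.2 + p.2 = 0 ∨ p.1 + p.1 = p.2 + p.2))).image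
          (fun p => (p, p.1 - p.2)) := by
    ext ⟨⟨a, b⟩, c⟩
    simp only [d6, mem_filter, mem_image, BB, mem_product, mem_univ, and_true, not_or]
    constructor
    · rintro ⟨hp, h1, h2, h3, h4⟩
      refine ⟨(a, b), ⟨hp, h2, h3, h4⟩, ?_⟩
      have : a - b = c := by linear_combination h1
      rw [this]
    · rintro ⟨p, ⟨hp, h2, h3, h4⟩, heq⟩
      injection heq with h1 hc
      subst h1; subst hc
      exact ⟨hp, by ring, h2, h3, h4⟩
  rw [hrep, card_image_of_injective _ (fun x y h => congrArg Prod.fst h)]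

lemma disjBB {p r : ((ZMod q × ZMod q) × ZMod q) → Prop} [DecidablePred p] [DecidablePred r]
    (h : ∀ a b c : ZMod q, a ≠ 0 → b ≠ 0 → a ≠ b → p ((a, b), c) → r ((a, b), c) → False) :
    Disjoint ((BB q).filter p) ((BB q).filter r) := by
  rw [disjoint_left]
  rintro ⟨⟨a, b⟩, c⟩ h1 h2
  rw [mem_filter] at h1 h2
  obtain ⟨ha, hb, hab⟩ := memBB.mp h1.1
  exact h a b c ha hb hab h1.2 h2.2

lemma disjPF {p r : (ZMod q × ZMod q) → Prop} [DecidablePred p] [DecidablePred r]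
    (h : ∀ a b : ZMod q, a ≠ 0 → b ≠ 0 → a ≠ b → p (a, b) → r (a, b) → False) :
    Disjoint ((PF q).filter p) ((PF q).filter r) := by
  rw [disjoint_left]
  rintro ⟨a, b⟩ h1 h2
  rw [mem_filter] at h1 h2
  obtain ⟨-, ha, hb, hab⟩ := mem_filter.mp h1.1
  exact h a b ha hb hab h1.2 h2.2

lemma U_card : ((BB q).filter (fun t => ¬ cCond q t)).card
    = ((BB q).filter (d1 q)).card + ((BB q).filter (d2 q)).card
      + ((BB q).filter (d3 q)).card + ((BB q).filter (d4 q)).card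
      + ((BB q).filter (d5 q)).card + ((BB q).filter (d6 q)).card := by
  have hsp : (BB q).filter (fun t => ¬ cCond q t)
      = (BB q).filter (fun t => d1 q t ∨ d2 q t ∨ d3 q t ∨ d4 q t ∨ d5 q t ∨ d6 q t) :=
    filter_congr (fun t _ => by rw [notc])
  have D12 : Disjoint ((BB q).filter (d1 q)) ((BB q).filter (d2 q)) :=
    disjBB (fun a b c ha hb hab h1 h2 => ha (by linear_combination -h2 + h1))
  have D13 : Disjoint ((BB q).filter (d1 q)) ((BB q).filter (d3 q)) :=
    disjBB (fun a b c ha hb hab h1 h2 => hb (by linear_combination -h2 + h1))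
  have D14 : Disjoint ((BB q).filter (d1 q)) ((BB q).filter (d4 q)) :=
    disjBB (fun a b c ha hb hab h1 h2 => h2.2 (by linear_combination -h2.1 + h1))
  have D15 : Disjoint ((BB q).filter (d1 q)) ((BB q).filter (d5 q)) :=
    disjBB (fun a b c ha hb hab h1 h2 => hab (by linear_combination -h2.1 - h1))
  have D16 : Disjoint ((BB q).filter (d1 q)) ((BB q).filter (d6 q)) :=
    disjBB (fun a b c ha hb hab h1 h2 => hab (by linear_combination h2.1 + h1))
  have D23 : Disjoint ((BB q).filter (d2 q)) ((BB q).filter (d3 q)) :=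
    disjBB (fun a b c ha hb hab h1 h2 => hab (by linear_combination -h1 + h2))
  have D24 : Disjoint ((BB q).filter (d2 q)) ((BB q).filter (d4 q)) :=
    disjBB (fun a b c ha hb hab h1 h2 => hb (by linear_combination h1 - h2.1))
  have D25 : Disjoint ((BB q).filter (d2 q)) ((BB q).filter (d5 q)) :=
    disjBB (fun a b c ha hb hab h1 h2 => h2.2.1 (by linear_combination h2.1 + h1))
  have D26 : Disjoint ((BB q).filter (d2 q)) ((BB q).filter (d6 q)) :=
    disjBB (fun a b c ha hb hab h1 h2 => hb (by linear_combination -h2.1 - h1))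
  have D34 : Disjoint ((BB q).filter (d3 q)) ((BB q).filter (d4 q)) :=
    disjBB (fun a b c ha hb hab h1 h2 => ha (by linear_combination h1 - h2.1))
  have D35 : Disjoint ((BB q).filter (d3 q)) ((BB q).filter (d5 q)) :=
    disjBB (fun a b c ha hb hab h1 h2 => ha (by linear_combination -h2.1 - h1))
  have D36 : Disjoint ((BB q).filter (d3 q)) ((BB q).filter (d6 q)) :=
    disjBB (fun a b c ha hb hab h1 h2 => h2.2.1 (by linear_combination h2.1 + h1))
  have D45 : Disjoint ((BB q).filter (d4 q)) ((BB q).filter (d5 q)) :=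
    disjBB (fun a b c ha hb hab h1 h2 => h2.2.2 (by linear_combination -h2.1 - h1.1))
  have D46 : Disjoint ((BB q).filter (d4 q)) ((BB q).filter (d6 q)) :=
    disjBB (fun a b c ha hb hab h1 h2 => h2.2.2.1 (by linear_combination -h2.1 - h1.1))
  have D56 : Disjoint ((BB q).filter (d5 q)) ((BB q).filter (d6 q)) :=
    disjBB (fun a b c ha hb hab h1 h2 => h2.2.2.2 (by linear_combination h2.1 - h1.1))
  rw [hsp, filter_or, filter_or, filter_or, filter_or, filter_or]
  rw [card_union_of_disjoint, card_union_of_disjoint, card_union_of_disjoint,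
    card_union_of_disjoint, card_union_of_disjoint]
  · ring
  · exact D56
  · exact disjoint_union_right.mpr ⟨D45, D46⟩
  · exact disjoint_union_right.mpr ⟨D34, disjoint_union_right.mpr ⟨D35, D36⟩⟩
  · exact disjoint_union_right.mpr ⟨D23, disjoint_union_right.mpr
      ⟨D24, disjoint_union_right.mpr ⟨D25, D26⟩⟩⟩
  · exact disjoint_union_right.mpr ⟨D12, disjoint_union_right.mpr
      ⟨D13, disjoint_union_right.mpr ⟨D14, disjoint_union_right.mpr ⟨D15, D16⟩⟩⟩⟩

lemma Qp_filter :
    (univ.filter (Qp q) : Finset ((ZMod q × ZMod q) × ZMod q))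
      = (BB q).filter (cCond q) := by
  ext ⟨⟨a, b⟩, c⟩
  simp only [Qp, cCond, BB, PF, mem_filter, mem_product, mem_univ, true_and, and_true]
  constructor
  · rintro ⟨h1, h2, h3, h4, h5, h6, h7, h8, h9⟩
    exact ⟨⟨h1, h2, h4⟩, h3, fun h => h5 h.symm, fun h => h6 h.symm, h7, h8, h9⟩
  · rintro ⟨⟨h1, h2, h4⟩, h3, h5, h6, h7, h8, h9⟩
    exact ⟨h1, h2, h3, h4, fun h => h5 h.symm, fun h => h6 h.symm, h7, h8, h9⟩

lemma split4 : ((PF q).filter (fun p => p.1 + p.2 = 0)).card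
    + ((PF q).filter (fun p => ¬(p.1 + p.2 = 0))).card = (PF q).card :=
  card_filter_add_card_filter_not _

lemma split5 : (((PF q).filter (fun p => p.2 = p.1 + p.1)).card
      + ((PF q).filter (fun p => p.1 + p.1 = 0)).card)
    + ((PF q).filter (fun p => ¬(p.2 = p.1 + p.1 ∨ p.1 + p.1 = 0))).card
    = (PF q).card := by
  have h := card_filter_add_card_filter_not
    (s := PF q) (p := fun p => p.2 = p.1 + p.1 ∨ p.1 + p.1 = 0)
  rw [filter_or, card_union_of_disjoint] at h
  · exact h
  · exact disjPF (fun a b ha hb hab h1 h2 => hb (by linear_combination h1 + h2))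

lemma split6 : (((PF q).filter (fun p => p.1 = p.2 + p.2)).card
      + (((PF q).filter (fun p => p.2 + p.2 = 0)).card
        + ((PF q).filter (fun p => p.1 + p.1 = p.2 + p.2)).card))
    + ((PF q).filter (fun p =>
        ¬(p.1 = p.2 + p.2 ∨ p.2 + p.2 = 0 ∨ p.1 + p.1 = p.2 + p.2))).card
    = (PF q).card := by
  have h := card_filter_add_card_filter_not
    (s := PF q) (p := fun p => p.1 = p.2 + p.2 ∨ p.2 + p.2 = 0 ∨ p.1 + p.1 = p.2 + p.2)
  rw [filter_or, filter_or, card_union_of_disjoint, card_union_of_disjoint] at h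
  · exact h
  · exact disjPF (fun a b ha hb hab h1 h2 =>
      hab (tt_unique (by linear_combination h2 + h1) h1 ha hb))
  · refine disjoint_union_right.mpr ⟨?_, ?_⟩
    · exact disjPF (fun a b ha hb hab h1 h2 => ha (by linear_combination h1 + h2))
    · exact disjPF (fun a b ha hb hab h1 h2 => ha (by linear_combination h2 - h1))

lemma main_count (hq2 : 2 ≤ q) :
    (((univ : Finset ((ZMod q × ZMod q) × ZMod q)).filter (Qp q)).card : ℤ)
      = if q % 2 = 1 then ((q:ℤ)-1)*((q:ℤ)-3)*((q:ℤ)-5)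
        else ((q:ℤ)-2)*((q:ℤ)-3)*((q:ℤ)-4) := by
  rw [Qp_filter]
  have hsplitN := card_filter_add_card_filter_not (s := BB q) (p := cCond q)
  have hBBN : (BB q).card = (PF q).card * q := by
    rw [card_product, card_univ, ZMod.card]
  rw [hBBN] at hsplitN
  have A : ((((BB q).filter (cCond q)).card : ℤ))
      + (((BB q).filter (fun t => ¬ cCond q t)).card : ℤ)
      = ((PF q).card : ℤ) * q := by exact_mod_cast hsplitN
  have B : (((BB q).filter (fun t => ¬ cCond q t)).card : ℤ)
      = (((BB q).filter (d1 q)).card : ℤ) + (((BB q).filter (d2 q)).card : ℤ)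
      + (((BB q).filter (d3 q)).card : ℤ) + (((BB q).filter (d4 q)).card : ℤ)
      + (((BB q).filter (d5 q)).card : ℤ) + (((BB q).filter (d6 q)).card : ℤ) := by
    exact_mod_cast U_card
  have h1 : (((BB q).filter (d1 q)).card : ℤ) = ((PF q).card : ℤ) := by
    exact_mod_cast U1_card
  have h2 : (((BB q).filter (d2 q)).card : ℤ) = ((PF q).card : ℤ) := by
    exact_mod_cast U2_card
  have h3 : (((BB q).filter (d3 q)).card : ℤ) = ((PF q).card : ℤ) := by
    exact_mod_cast U3_card
  have h4 : (((BB q).filter (d4 q)).card : ℤ)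
      = (((PF q).filter (fun p => ¬(p.1 + p.2 = 0))).card : ℤ) := by
    exact_mod_cast U4_card
  have h5 : (((BB q).filter (d5 q)).card : ℤ)
      = (((PF q).filter (fun p => ¬(p.2 = p.1 + p.1 ∨ p.1 + p.1 = 0))).card : ℤ) := by
    exact_mod_cast U5_card
  have h6 : (((BB q).filter (d6 q)).card : ℤ)
      = (((PF q).filter (fun p =>
          ¬(p.1 = p.2 + p.2 ∨ p.2 + p.2 = 0 ∨ p.1 + p.1 = p.2 + p.2))).card : ℤ) := by
    exact_mod_cast U6_card
  have C : (((PF q).filter (fun p => p.1 + p.2 = 0)).card : ℤ)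
      + (((PF q).filter (fun p => ¬(p.1 + p.2 = 0))).card : ℤ) = ((PF q).card : ℤ) := by
    exact_mod_cast split4
  have D : ((((PF q).filter (fun p => p.2 = p.1 + p.1)).card : ℤ)
      + (((PF q).filter (fun p => p.1 + p.1 = 0)).card : ℤ))
      + (((PF q).filter (fun p => ¬(p.2 = p.1 + p.1 ∨ p.1 + p.1 = 0))).card : ℤ)
      = ((PF q).card : ℤ) := by exact_mod_cast split5
  have E : ((((PF q).filter (fun p => p.1 = p.2 + p.2)).card : ℤ)
      + ((((PF q).filter (fun p => p.2 + p.2 = 0)).card : ℤ)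
        + (((PF q).filter (fun p => p.1 + p.1 = p.2 + p.2)).card : ℤ)))
      + (((PF q).filter (fun p =>
          ¬(p.1 = p.2 + p.2 ∨ p.2 + p.2 = 0 ∨ p.1 + p.1 = p.2 + p.2))).card : ℤ)
      = ((PF q).card : ℤ) := by exact_mod_cast split6
  have G1 : (((PF q).filter (fun p => p.1 + p.2 = 0)).card : ℤ) = ((tors q).card : ℤ) := by
    exact_mod_cast n1_card
  have G2 : (((PF q).filter (fun p => p.2 = p.1 + p.1)).card : ℤ)
      = ((tors q).card : ℤ) := by exact_mod_cast n5_card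
  have G3 : (((PF q).filter (fun p => p.1 = p.2 + p.2)).card : ℤ)
      = ((tors q).card : ℤ) := by exact_mod_cast na2b_card
  have F : ((PF q).card : ℤ) = ((q:ℤ) - 1) * ((q:ℤ) - 2) := by
    have e1 : ((q - 1 : ℕ) : ℤ) = (q:ℤ) - 1 := by omega
    have e2 : ((q - 2 : ℕ) : ℤ) = (q:ℤ) - 2 := by omega
    rw [card_PF, Nat.cast_mul, e1, e2]
  rcases Nat.mod_two_eq_zero_or_one q with hpar | hpar
  · rw [if_neg (by omega)]
    have Ht : ((tors q).card : ℤ) = (q:ℤ) - 2 := by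
      have := tors_card_even (q := q) hpar; omega
    have Z1 : (((PF q).filter (fun p => p.2 + p.2 = 0)).card : ℤ) = (q:ℤ) - 2 := by
      have := n2b0_even (q := q) hpar; omega
    have Z2 : (((PF q).filter (fun p => p.1 + p.1 = 0)).card : ℤ) = (q:ℤ) - 2 := by
      have := na20_even (q := q) hpar; omega
    have Z3 : (((PF q).filter (fun p => p.1 + p.1 = p.2 + p.2)).card : ℤ) = (q:ℤ) - 2 := by
      have := neq_even (q := q) hpar; omega
    linear_combination A - B - h1 - h2 - h3 - h4 - h5 - h6 - C - D - E + G1 + G2 + G3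
      + 3*Ht + Z1 + Z2 + Z3 + ((q:ℤ) - 6)*F
  · rw [if_pos hpar]
    have Ht : ((tors q).card : ℤ) = (q:ℤ) - 1 := by
      have := tors_card_odd (q := q) hpar; omega
    have Z1 : (((PF q).filter (fun p => p.2 + p.2 = 0)).card : ℤ) = 0 := by
      have := n2b0_odd (q := q) hpar; omega
    have Z2 : (((PF q).filter (fun p => p.1 + p.1 = 0)).card : ℤ) = 0 := by
      have := na20_odd (q := q) hpar; omega
    have Z3 : (((PF q).filter (fun p => p.1 + p.1 = p.2 + p.2)).card : ℤ) = 0 := by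
      have := neq_odd (q := q) hpar; omega
    linear_combination A - B - h1 - h2 - h3 - h4 - h5 - h6 - C - D - E + G1 + G2 + G3
      + 3*Ht + Z1 + Z2 + Z3 + ((q:ℤ) - 6)*F


/-- The characteristic quasi-polynomial of the mid-hyperplane arrangement `M_4`:
for a positive integer `q`, the number of `z ∈ (ℤ/qℤ)^4` with pairwise distinct
coordinates and `z_1 + z_2 ≠ z_3 + z_4`, `z_1 + z_3 ≠ z_2 + z_4`,
`z_1 + z_4 ≠ z_2 + z_3` equals `q(q−1)(q−3)(q−5)` if `q` is odd and
`q(q−2)(q−3)(q−4)` if `q` is even. -/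
theorem stmt_17 (q : ℕ) (hq : 0 < q) :
    (Nat.card {z : Fin 4 → ZMod q //
        (∀ i j : Fin 4, i < j → z i ≠ z j) ∧
        z 0 + z 1 ≠ z 2 + z 3 ∧ z 0 + z 2 ≠ z 1 + z 3 ∧ z 0 + z 3 ≠ z 1 + z 2} : ℤ) =
      if q % 2 = 1 then
        (q : ℤ) * ((q : ℤ) - 1) * ((q : ℤ) - 3) * ((q : ℤ) - 5)
      else
        (q : ℤ) * ((q : ℤ) - 2) * ((q : ℤ) - 3) * ((q : ℤ) - 4) := by
  haveI : NeZero q := ⟨hq.ne'⟩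
  by_cases hq1 : q = 1
  · subst hq1
    have hempty : IsEmpty {z : Fin 4 → ZMod 1 //
        (∀ i j : Fin 4, i < j → z i ≠ z j) ∧
        z 0 + z 1 ≠ z 2 + z 3 ∧ z 0 + z 2 ≠ z 1 + z 3 ∧ z 0 + z 3 ≠ z 1 + z 2} := by
      refine ⟨fun z => ?_⟩
      exact z.2.1 0 1 (by decide) (Subsingleton.elim _ _)
    rw [Nat.card_of_isEmpty]
    norm_num
  · have hq2 : 2 ≤ q := by omega
    rw [head_reduce q]
    have := main_count (q := q) hq2
    rcases Nat.mod_two_eq_zero_or_one q with hpar | hpar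
    · rw [if_neg (by omega)] at this ⊢
      push_cast
      rw [this]
      ring
    · rw [if_pos hpar] at this ⊢
      push_cast
      rw [this]
      ring
end

section
/- As formal power series in t, Σ_{q=1}^{∞} χ_{M_4}(q) t^q = 48 t^6 (t + 3) / ((1 − t)^5 (1 + t)^3), where χ_{M_4}(q) is the number of z ∈ (ℤ/qℤ)^4 with z_i ≠ z_j for all 1 ≤ i < j ≤ 4 and z_1 + z_2 ≠ z_3 + z_4, z_1 + z_3 ≠ z_2 + z_4, z_1 + z_4 ≠ z_2 + z_3. -/
open Finset

private lemma card_dep_pair {α β : Type} [Fintype α] [Fintype β] [DecidableEq α] [DecidableEq β]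
    {P : α → Prop} {Q : α → β → Prop} [DecidablePred P] [∀ a, DecidablePred (Q a)] {m : ℕ}
    (h : ∀ a, P a → (univ.filter (Q a)).card = m) :
    (univ.filter fun p : α × β => P p.1 ∧ Q p.1 p.2).card = (univ.filter P).card * m := by
  rw [Finset.card_eq_sum_card_fiberwise (f := Prod.fst) (t := univ.filter P)
    (fun x hx => by simp only [Finset.mem_coe, mem_filter, mem_univ, true_and] at hx ⊢; exact hx.1)]
  rw [Finset.sum_congr rfl (fun a ha => ?_), Finset.sum_const, smul_eq_mul]
  have ha' : P a := by simpa using ha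
  rw [← h a ha']
  refine Finset.card_bij' (fun p _ => p.2) (fun b _ => (a, b)) ?_ ?_ ?_ ?_
  · intro p hp
    simp only [mem_filter, mem_univ, true_and] at hp ⊢
    obtain ⟨⟨_, hQ⟩, h1⟩ := hp
    rwa [h1] at hQ
  · intro b hb
    simp only [mem_filter, mem_univ, true_and] at hb
    exact Finset.mem_filter.mpr ⟨Finset.mem_filter.mpr ⟨Finset.mem_univ _, ha', hb⟩, rfl⟩
  · intro p hp
    simp only [mem_filter] at hp
    exact Prod.ext hp.2.symm rfl
  · intro b _; rfl

private lemma card_dep_triple {α β γ : Type} [Fintype α] [Fintype β] [Fintype γ]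
    [DecidableEq α] [DecidableEq β] [DecidableEq γ]
    {P : α → Prop} {Q : α → β → Prop} {R : α → β → γ → Prop}
    [DecidablePred P] [∀ a, DecidablePred (Q a)] [∀ a b, DecidablePred (R a b)] {m k : ℕ}
    (hQ : ∀ a, P a → (univ.filter (Q a)).card = m)
    (hR : ∀ a b, P a → Q a b → (univ.filter (R a b)).card = k) :
    (univ.filter fun p : α × β × γ => P p.1 ∧ Q p.1 p.2.1 ∧ R p.1 p.2.1 p.2.2).card
      = (univ.filter P).card * (m * k) := by
  exact card_dep_pair (Q := fun a (r : β × γ) => Q a r.1 ∧ R a r.1 r.2)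
    (fun a haP => by rw [card_dep_pair (fun b hbQ => hR a b haP hbQ), hQ a haP])

variable {q : ℕ} [NeZero q]

variable {q : ℕ} [NeZero q]

private lemma card_eq_one' (u : ZMod q) : (univ.filter fun x : ZMod q => x = u).card = 1 := by
  simp [Finset.filter_eq']

private lemma card_ne1 (u : ZMod q) : (univ.filter fun x : ZMod q => x ≠ u).card = q - 1 := by
  have : (univ.filter fun x : ZMod q => x ≠ u) = ({u} : Finset (ZMod q))ᶜ := by
    ext x; simp
  rw [this, Finset.card_compl, ZMod.card, Finset.card_singleton]

private lemma card_ne2 (u v : ZMod q) (huv : u ≠ v) :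
    (univ.filter fun x : ZMod q => x ≠ u ∧ x ≠ v).card = q - 2 := by
  have : (univ.filter fun x : ZMod q => x ≠ u ∧ x ≠ v) = ({u, v} : Finset (ZMod q))ᶜ := by
    ext x; simp [not_or]
  rw [this, Finset.card_compl, ZMod.card,
    Finset.card_insert_of_notMem (by simp [huv]), Finset.card_singleton]

private lemma card_ne3 (u v w : ZMod q) (huv : u ≠ v) (huw : u ≠ w) (hvw : v ≠ w) :
    (univ.filter fun x : ZMod q => x ≠ u ∧ x ≠ v ∧ x ≠ w).card = q - 3 := by
  have : (univ.filter fun x : ZMod q => x ≠ u ∧ x ≠ v ∧ x ≠ w)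
      = ({u, v, w} : Finset (ZMod q))ᶜ := by
    ext x; simp [not_or]
  rw [this, Finset.card_compl, ZMod.card,
    Finset.card_insert_of_notMem (by simp [huv, huw]),
    Finset.card_insert_of_notMem (by simp [hvw]), Finset.card_singleton]

-- inclusion-exclusion glue

private lemma ie_glue {α : Type} [DecidableEq α] (s : Finset α) (pa pb pc : α → Prop)
    [DecidablePred pa] [DecidablePred pb] [DecidablePred pc] :
    (s.filter fun x => pa x ∨ pb x ∨ pc x).card
      + (s.filter fun x => pa x ∧ pb x).card + (s.filter fun x => pa x ∧ pc x).card
      + (s.filter fun x => pb x ∧ pc x).card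
    = (s.filter pa).card + (s.filter pb).card + (s.filter pc).card
      + (s.filter fun x => (pa x ∧ pb x) ∧ pc x).card := by
  have h1 := Finset.card_union_add_card_inter (s.filter pa) (s.filter pb ∪ s.filter pc)
  have h2 := Finset.card_union_add_card_inter (s.filter pb) (s.filter pc)
  have h3 := Finset.card_union_add_card_inter (s.filter pa ∩ s.filter pb)
      (s.filter pa ∩ s.filter pc)
  have e1 : s.filter pa ∩ (s.filter pb ∪ s.filter pc)
      = (s.filter pa ∩ s.filter pb) ∪ (s.filter pa ∩ s.filter pc) :=
    Finset.inter_union_distrib_left _ _ _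
  have e2 : (s.filter pa ∩ s.filter pb) ∩ (s.filter pa ∩ s.filter pc)
      = s.filter fun x => (pa x ∧ pb x) ∧ pc x := by
    ext x; simp only [Finset.mem_inter, Finset.mem_filter]; tauto
  have e3 : s.filter pa ∩ s.filter pb = s.filter fun x => pa x ∧ pb x := by
    rw [← Finset.filter_and]
  have e4 : s.filter pa ∩ s.filter pc = s.filter fun x => pa x ∧ pc x := by
    rw [← Finset.filter_and]
  have e5 : s.filter pb ∩ s.filter pc = s.filter fun x => pb x ∧ pc x := by
    rw [← Finset.filter_and]
  have e6 : s.filter pa ∪ (s.filter pb ∪ s.filter pc)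
      = s.filter fun x => pa x ∨ pb x ∨ pc x := by
    rw [Finset.filter_or, Finset.filter_or]
  rw [e2, e3, e4] at h3
  rw [e6, e1, e3, e4] at h1
  rw [e5] at h2
  omega

private lemma two_torsion_odd (k : ℕ) (a : ZMod (2*k+1)) (h : a + a = 0) : a = 0 := by
  haveI : NeZero (2*k+1) := ⟨by omega⟩
  have hv : (a + a).val = (a.val + a.val) % (2*k+1) := ZMod.val_add a a
  rw [h, ZMod.val_zero] at hv
  have hlt : a.val < 2*k+1 := ZMod.val_lt a
  obtain ⟨c, hc⟩ := Nat.dvd_of_mod_eq_zero hv.symm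
  have hc2 : c ≤ 1 := by nlinarith
  have : a.val = 0 := by interval_cases c <;> omega
  exact (ZMod.val_eq_zero a).mp this

private lemma two_torsion_even (k : ℕ) (a : ZMod (2*k+2)) (h : a + a = 0) (h0 : a ≠ 0) :
    a = ((k+1 : ℕ) : ZMod (2*k+2)) := by
  haveI : NeZero (2*k+2) := ⟨by omega⟩
  have hv : (a + a).val = (a.val + a.val) % (2*k+2) := ZMod.val_add a a
  rw [h, ZMod.val_zero] at hv
  have hlt : a.val < 2*k+2 := ZMod.val_lt a
  have h0' : a.val ≠ 0 := fun hh => h0 ((ZMod.val_eq_zero a).mp hh)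
  obtain ⟨c, hc⟩ := Nat.dvd_of_mod_eq_zero hv.symm
  have hc2 : c ≤ 1 := by nlinarith
  have hval : a.val = k+1 := by interval_cases c <;> omega
  apply ZMod.val_injective
  rw [hval, ZMod.val_cast_of_lt (by omega)]

private lemma t_ne_zero (k : ℕ) : ((k+1 : ℕ) : ZMod (2*k+2)) ≠ 0 := by
  haveI : NeZero (2*k+2) := ⟨by omega⟩
  intro h
  have := (ZMod.val_eq_zero _).mpr h
  rw [ZMod.val_cast_of_lt (by omega)] at this
  omega

private lemma t_add_t (k : ℕ) : ((k+1 : ℕ) : ZMod (2*k+2)) + ((k+1 : ℕ) : ZMod (2*k+2)) = 0 := by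
  rw [← Nat.cast_add]
  have : k+1+(k+1) = 2*k+2 := by ring
  rw [this]
  exact ZMod.natCast_self _

private lemma PTiff {q : ℕ} [NeZero q] (z : Fin 4 → ZMod q) :
    (∀ i j : Fin 4, i < j → z i ≠ z j) ↔
      (z 0 ≠ z 1 ∧ z 0 ≠ z 2 ∧ z 0 ≠ z 3 ∧ z 1 ≠ z 2 ∧ z 1 ≠ z 3 ∧ z 2 ≠ z 3) := by
  constructor
  · intro h
    exact ⟨h 0 1 (by decide), h 0 2 (by decide), h 0 3 (by decide),
      h 1 2 (by decide), h 1 3 (by decide), h 2 3 (by decide)⟩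
  · rintro ⟨h1, h2, h3, h4, h5, h6⟩ i j hij
    fin_cases i <;> fin_cases j <;>
      first
        | exact absurd hij (by decide)
        | exact h1 | exact h2 | exact h3 | exact h4 | exact h5 | exact h6

private lemma reduce (q : ℕ) [NeZero q] :
    Nat.card {z : Fin 4 → ZMod q //
      (∀ i j : Fin 4, i < j → z i ≠ z j) ∧
      z 0 + z 1 ≠ z 2 + z 3 ∧ z 0 + z 2 ≠ z 1 + z 3 ∧ z 0 + z 3 ≠ z 1 + z 2}
    = q * (univ.filter (fun p : ZMod q × ZMod q × ZMod q =>
        (p.1 ≠ 0 ∧ (p.2.1 ≠ 0 ∧ p.2.1 ≠ p.1) ∧ (p.2.2 ≠ 0 ∧ p.2.2 ≠ p.1 ∧ p.2.2 ≠ p.2.1)) ∧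
        ¬(p.2.2 = p.1 + p.2.1) ∧ ¬(p.2.1 = p.1 + p.2.2) ∧ ¬(p.1 = p.2.1 + p.2.2))).card := by
  rw [Nat.card_eq_fintype_card, Fintype.card_subtype]
  have step2 := card_dep_pair (α := ZMod q) (β := ZMod q × ZMod q × ZMod q)
    (P := fun _ => True)
    (Q := fun _ r =>
        (r.1 ≠ 0 ∧ (r.2.1 ≠ 0 ∧ r.2.1 ≠ r.1) ∧ (r.2.2 ≠ 0 ∧ r.2.2 ≠ r.1 ∧ r.2.2 ≠ r.2.1)) ∧
        ¬(r.2.2 = r.1 + r.2.1) ∧ ¬(r.2.1 = r.1 + r.2.2) ∧ ¬(r.1 = r.2.1 + r.2.2))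
    (m := (univ.filter (fun p : ZMod q × ZMod q × ZMod q =>
        (p.1 ≠ 0 ∧ (p.2.1 ≠ 0 ∧ p.2.1 ≠ p.1) ∧ (p.2.2 ≠ 0 ∧ p.2.2 ≠ p.1 ∧ p.2.2 ≠ p.2.1)) ∧
        ¬(p.2.2 = p.1 + p.2.1) ∧ ¬(p.2.1 = p.1 + p.2.2) ∧ ¬(p.1 = p.2.1 + p.2.2))).card)
    (fun a _ => rfl)
  rw [Finset.filter_true, Finset.card_univ, ZMod.card] at step2
  rw [← step2]
  refine Finset.card_bij' (fun z _ => (z 3, (z 0 - z 3, z 1 - z 3, z 2 - z 3)))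
    (fun p _ => ![p.2.1 + p.1, p.2.2.1 + p.1, p.2.2.2 + p.1, p.1]) ?_ ?_ ?_ ?_
  · intro z hz
    simp only [Finset.mem_filter, Finset.mem_univ, true_and] at hz ⊢
    obtain ⟨hd, hs1, hs2, hs3⟩ := hz
    rw [PTiff] at hd
    obtain ⟨h1, h2, h3, h4, h5, h6⟩ := hd
    refine ⟨⟨?_, ⟨?_, ?_⟩, ?_, ?_, ?_⟩, ?_, ?_, ?_⟩
    · exact sub_ne_zero.mpr h3
    · exact sub_ne_zero.mpr h5
    · intro h; exact h1 (by linear_combination -h)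
    · exact sub_ne_zero.mpr h6
    · intro h; exact h2 (by linear_combination -h)
    · intro h; exact h4 (by linear_combination -h)
    · intro h; exact hs1 (by linear_combination -h)
    · intro h; exact hs2 (by linear_combination -h)
    · intro h; exact hs3 (by linear_combination h)
  · intro p hp
    simp only [Finset.mem_filter, Finset.mem_univ, true_and] at hp ⊢
    obtain ⟨⟨ha0, ⟨hb0, hba⟩, hc0, hca, hcb⟩, hna, hnb, hnc⟩ := hp
    refine ⟨?_, ?_, ?_, ?_⟩
    · refine (PTiff _).mpr ⟨?_, ?_, ?_, ?_, ?_, ?_⟩ <;>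
        simp only [Matrix.cons_val_zero, Matrix.cons_val_one, Matrix.head_cons,
          Matrix.cons_val_two, Matrix.cons_val_three, Matrix.tail_cons]
      · intro h; exact hba (by linear_combination -h)
      · intro h; exact hca (by linear_combination -h)
      · intro h; exact ha0 (by linear_combination h)
      · intro h; exact hcb (by linear_combination -h)
      · intro h; exact hb0 (by linear_combination h)
      · intro h; exact hc0 (by linear_combination h)
    all_goals simp only [Matrix.cons_val_zero, Matrix.cons_val_one, Matrix.head_cons,
        Matrix.cons_val_two, Matrix.cons_val_three, Matrix.tail_cons]
    · intro h; exact hna (by linear_combination -h)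
    · intro h; exact hnb (by linear_combination -h)
    · intro h; exact hnc (by linear_combination h)
  · intro z _
    funext x
    fin_cases x <;>
      simp [Matrix.cons_val_zero, Matrix.cons_val_one, Matrix.head_cons,
        Matrix.cons_val_two, Matrix.cons_val_three, Matrix.tail_cons]
  · intro p _
    obtain ⟨w, a, b, c⟩ := p
    simp [Matrix.cons_val_zero, Matrix.cons_val_one, Matrix.head_cons,
      Matrix.cons_val_two, Matrix.cons_val_three, Matrix.tail_cons]

private lemma filterA_eq :
    ((univ.filter (fun p : ZMod q × ZMod q × ZMod q =>
        p.1 ≠ 0 ∧ (p.2.1 ≠ 0 ∧ p.2.1 ≠ p.1) ∧ (p.2.2 ≠ 0 ∧ p.2.2 ≠ p.1 ∧ p.2.2 ≠ p.2.1))).filter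
      (fun p => p.2.2 = p.1 + p.2.1))
    = univ.filter (fun p : ZMod q × ZMod q × ZMod q =>
        p.1 ≠ 0 ∧ (p.2.1 ≠ 0 ∧ p.2.1 ≠ p.1 ∧ p.2.1 ≠ -p.1) ∧ p.2.2 = p.1 + p.2.1) := by
  rw [Finset.filter_filter]
  apply Finset.filter_congr
  intro p _
  constructor
  · rintro ⟨⟨ha0, ⟨hb0, hba⟩, hc0, hca, hcb⟩, hpa⟩
    exact ⟨ha0, ⟨hb0, hba, fun h => hc0 (by linear_combination hpa + h)⟩, hpa⟩
  · rintro ⟨ha0, ⟨hb0, hba, hbna⟩, hpa⟩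
    refine ⟨⟨ha0, ⟨hb0, hba⟩, ?_, ?_, ?_⟩, hpa⟩
    · intro h; exact hbna (by linear_combination h - hpa)
    · intro h; exact hb0 (by linear_combination h - hpa)
    · intro h; exact ha0 (by linear_combination h - hpa)

private lemma filterB_eq :
    ((univ.filter (fun p : ZMod q × ZMod q × ZMod q =>
        p.1 ≠ 0 ∧ (p.2.1 ≠ 0 ∧ p.2.1 ≠ p.1) ∧ (p.2.2 ≠ 0 ∧ p.2.2 ≠ p.1 ∧ p.2.2 ≠ p.2.1))).filter
      (fun p => p.2.1 = p.1 + p.2.2))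
    = univ.filter (fun p : ZMod q × ZMod q × ZMod q =>
        p.1 ≠ 0 ∧ (p.2.1 ≠ 0 ∧ p.2.1 ≠ p.1 ∧ p.2.1 ≠ p.1 + p.1) ∧ p.2.2 = p.2.1 - p.1) := by
  rw [Finset.filter_filter]
  apply Finset.filter_congr
  intro p _
  constructor
  · rintro ⟨⟨ha0, ⟨hb0, hba⟩, hc0, hca, hcb⟩, hpb⟩
    exact ⟨ha0, ⟨hb0, hba, fun h => hca (by linear_combination h - hpb)⟩,
      by linear_combination -hpb⟩
  · rintro ⟨ha0, ⟨hb0, hba, hbaa⟩, hcr⟩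
    refine ⟨⟨ha0, ⟨hb0, hba⟩, ?_, ?_, ?_⟩, by linear_combination -hcr⟩
    · intro h; exact hba (by linear_combination h - hcr)
    · intro h; exact hbaa (by linear_combination h - hcr)
    · intro h; exact ha0 (by linear_combination hcr - h)

private lemma cardC_eq_cardA :
    ((univ.filter (fun p : ZMod q × ZMod q × ZMod q =>
        p.1 ≠ 0 ∧ (p.2.1 ≠ 0 ∧ p.2.1 ≠ p.1) ∧ (p.2.2 ≠ 0 ∧ p.2.2 ≠ p.1 ∧ p.2.2 ≠ p.2.1))).filter
      (fun p => p.1 = p.2.1 + p.2.2)).card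
    = ((univ.filter (fun p : ZMod q × ZMod q × ZMod q =>
        p.1 ≠ 0 ∧ (p.2.1 ≠ 0 ∧ p.2.1 ≠ p.1) ∧ (p.2.2 ≠ 0 ∧ p.2.2 ≠ p.1 ∧ p.2.2 ≠ p.2.1))).filter
      (fun p => p.2.2 = p.1 + p.2.1)).card := by
  refine Finset.card_bij' (fun p _ => (p.2.2, (p.2.1, p.1))) (fun p _ => (p.2.2, (p.2.1, p.1)))
    ?_ ?_ ?_ ?_
  · intro p hp
    simp only [Finset.mem_filter, Finset.mem_univ, true_and] at hp ⊢
    obtain ⟨⟨ha0, ⟨hb0, hba⟩, hc0, hca, hcb⟩, hpc⟩ := hp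
    exact ⟨⟨hc0, ⟨hb0, Ne.symm hcb⟩, ha0, Ne.symm hca, Ne.symm hba⟩,
      by linear_combination hpc⟩
  · intro p hp
    simp only [Finset.mem_filter, Finset.mem_univ, true_and] at hp ⊢
    obtain ⟨⟨ha0, ⟨hb0, hba⟩, hc0, hca, hcb⟩, hpa⟩ := hp
    exact ⟨⟨hc0, ⟨hb0, Ne.symm hcb⟩, ha0, Ne.symm hca, Ne.symm hba⟩,
      by linear_combination hpa⟩
  · intro p _; rfl
  · intro p _; rfl

private lemma filterN_eq :
    ((univ.filter (fun p : ZMod q × ZMod q × ZMod q =>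
        p.1 ≠ 0 ∧ (p.2.1 ≠ 0 ∧ p.2.1 ≠ p.1) ∧ (p.2.2 ≠ 0 ∧ p.2.2 ≠ p.1 ∧ p.2.2 ≠ p.2.1))).filter
      (fun p => ¬((p.2.2 = p.1 + p.2.1) ∨ (p.2.1 = p.1 + p.2.2) ∨ (p.1 = p.2.1 + p.2.2))))
    = univ.filter (fun p : ZMod q × ZMod q × ZMod q =>
        (p.1 ≠ 0 ∧ (p.2.1 ≠ 0 ∧ p.2.1 ≠ p.1) ∧ (p.2.2 ≠ 0 ∧ p.2.2 ≠ p.1 ∧ p.2.2 ≠ p.2.1)) ∧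
        ¬(p.2.2 = p.1 + p.2.1) ∧ ¬(p.2.1 = p.1 + p.2.2) ∧ ¬(p.1 = p.2.1 + p.2.2)) := by
  rw [Finset.filter_filter]
  apply Finset.filter_congr
  intro p _
  tauto

private lemma cardD_eq :
    (univ.filter (fun p : ZMod q × ZMod q × ZMod q =>
        p.1 ≠ 0 ∧ (p.2.1 ≠ 0 ∧ p.2.1 ≠ p.1) ∧ (p.2.2 ≠ 0 ∧ p.2.2 ≠ p.1 ∧ p.2.2 ≠ p.2.1))).card
    = (q - 1) * ((q - 2) * (q - 3)) := by
  have h := card_dep_triple (P := fun a : ZMod q => a ≠ 0)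
    (Q := fun a b => b ≠ 0 ∧ b ≠ a) (R := fun a b c => c ≠ 0 ∧ c ≠ a ∧ c ≠ b)
    (m := q - 2) (k := q - 3)
    (fun a ha => card_ne2 0 a (Ne.symm ha))
    (fun a b ha hb => card_ne3 0 a b (Ne.symm ha) (Ne.symm hb.1) (Ne.symm hb.2))
  rw [card_ne1] at h
  exact h

-- odd case: value of A-type sets

private lemma cardNA_odd (hodd : ∀ a : ZMod q, a + a = 0 → a = 0) :
    (univ.filter (fun p : ZMod q × ZMod q × ZMod q =>
        p.1 ≠ 0 ∧ (p.2.1 ≠ 0 ∧ p.2.1 ≠ p.1 ∧ p.2.1 ≠ -p.1) ∧ p.2.2 = p.1 + p.2.1)).card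
    = (q - 1) * (q - 3) := by
  have h := card_dep_triple (P := fun a : ZMod q => a ≠ 0)
    (Q := fun a b => b ≠ 0 ∧ b ≠ a ∧ b ≠ -a) (R := fun a b c => c = a + b)
    (m := q - 3) (k := 1)
    (fun a ha => card_ne3 0 a (-a) (Ne.symm ha) (fun h => ha (neg_eq_zero.mp h.symm))
      (fun h => ha (hodd a (by linear_combination h))))
    (fun a b _ _ => card_eq_one' (a + b))
  rw [card_ne1] at h
  rw [h, Nat.mul_one]

private lemma cardNB_odd (hodd : ∀ a : ZMod q, a + a = 0 → a = 0) :
    (univ.filter (fun p : ZMod q × ZMod q × ZMod q =>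
        p.1 ≠ 0 ∧ (p.2.1 ≠ 0 ∧ p.2.1 ≠ p.1 ∧ p.2.1 ≠ p.1 + p.1) ∧ p.2.2 = p.2.1 - p.1)).card
    = (q - 1) * (q - 3) := by
  have h := card_dep_triple (P := fun a : ZMod q => a ≠ 0)
    (Q := fun a b => b ≠ 0 ∧ b ≠ a ∧ b ≠ a + a) (R := fun a b c => c = b - a)
    (m := q - 3) (k := 1)
    (fun a ha => card_ne3 0 a (a + a) (Ne.symm ha) (fun h => ha (hodd a h.symm))
      (fun h => ha (by linear_combination -h)))
    (fun a b _ _ => card_eq_one' (b - a))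
  rw [card_ne1] at h
  rw [h, Nat.mul_one]

private lemma cardAB_odd (hodd : ∀ a : ZMod q, a + a = 0 → a = 0) :
    ((univ.filter (fun p : ZMod q × ZMod q × ZMod q =>
        p.1 ≠ 0 ∧ (p.2.1 ≠ 0 ∧ p.2.1 ≠ p.1) ∧ (p.2.2 ≠ 0 ∧ p.2.2 ≠ p.1 ∧ p.2.2 ≠ p.2.1))).filter
      (fun p => (p.2.2 = p.1 + p.2.1) ∧ (p.2.1 = p.1 + p.2.2))).card = 0 := by
  rw [Finset.card_eq_zero, Finset.filter_eq_empty_iff]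
  rintro p hp ⟨hpa, hpb⟩
  have := (Finset.mem_filter.mp hp).2.1
  exact this (hodd p.1 (by linear_combination -hpa - hpb))

private lemma cardAC_odd (hodd : ∀ a : ZMod q, a + a = 0 → a = 0) :
    ((univ.filter (fun p : ZMod q × ZMod q × ZMod q =>
        p.1 ≠ 0 ∧ (p.2.1 ≠ 0 ∧ p.2.1 ≠ p.1) ∧ (p.2.2 ≠ 0 ∧ p.2.2 ≠ p.1 ∧ p.2.2 ≠ p.2.1))).filter
      (fun p => (p.2.2 = p.1 + p.2.1) ∧ (p.1 = p.2.1 + p.2.2))).card = 0 := by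
  rw [Finset.card_eq_zero, Finset.filter_eq_empty_iff]
  rintro p hp ⟨hpa, hpc⟩
  have := (Finset.mem_filter.mp hp).2.2.1.1
  exact this (hodd p.2.1 (by linear_combination -hpa - hpc))

private lemma cardBC_odd (hodd : ∀ a : ZMod q, a + a = 0 → a = 0) :
    ((univ.filter (fun p : ZMod q × ZMod q × ZMod q =>
        p.1 ≠ 0 ∧ (p.2.1 ≠ 0 ∧ p.2.1 ≠ p.1) ∧ (p.2.2 ≠ 0 ∧ p.2.2 ≠ p.1 ∧ p.2.2 ≠ p.2.1))).filter
      (fun p => (p.2.1 = p.1 + p.2.2) ∧ (p.1 = p.2.1 + p.2.2))).card = 0 := by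
  rw [Finset.card_eq_zero, Finset.filter_eq_empty_iff]
  rintro p hp ⟨hpb, hpc⟩
  have := (Finset.mem_filter.mp hp).2.2.2.1
  exact this (hodd p.2.2 (by linear_combination -hpb - hpc))

private lemma cardABC_odd (hodd : ∀ a : ZMod q, a + a = 0 → a = 0) :
    ((univ.filter (fun p : ZMod q × ZMod q × ZMod q =>
        p.1 ≠ 0 ∧ (p.2.1 ≠ 0 ∧ p.2.1 ≠ p.1) ∧ (p.2.2 ≠ 0 ∧ p.2.2 ≠ p.1 ∧ p.2.2 ≠ p.2.1))).filter
      (fun p => ((p.2.2 = p.1 + p.2.1) ∧ (p.2.1 = p.1 + p.2.2)) ∧ (p.1 = p.2.1 + p.2.2))).card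
      = 0 := by
  rw [Finset.card_eq_zero, Finset.filter_eq_empty_iff]
  rintro p hp ⟨⟨hpa, hpb⟩, -⟩
  have := (Finset.mem_filter.mp hp).2.1
  exact this (hodd p.1 (by linear_combination -hpa - hpb))

private lemma count_N_odd (hodd : ∀ a : ZMod q, a + a = 0 → a = 0) :
    (univ.filter (fun p : ZMod q × ZMod q × ZMod q =>
        (p.1 ≠ 0 ∧ (p.2.1 ≠ 0 ∧ p.2.1 ≠ p.1) ∧ (p.2.2 ≠ 0 ∧ p.2.2 ≠ p.1 ∧ p.2.2 ≠ p.2.1)) ∧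
        ¬(p.2.2 = p.1 + p.2.1) ∧ ¬(p.2.1 = p.1 + p.2.2) ∧ ¬(p.1 = p.2.1 + p.2.2))).card
      + 3 * ((q - 1) * (q - 3))
      = (q - 1) * ((q - 2) * (q - 3)) := by
  have hpart := Finset.card_filter_add_card_filter_not
    (s := (univ : Finset (ZMod q × ZMod q × ZMod q)).filter (fun p =>
      p.1 ≠ 0 ∧ (p.2.1 ≠ 0 ∧ p.2.1 ≠ p.1) ∧ (p.2.2 ≠ 0 ∧ p.2.2 ≠ p.1 ∧ p.2.2 ≠ p.2.1)))
    (p := fun p => (p.2.2 = p.1 + p.2.1) ∨ (p.2.1 = p.1 + p.2.2) ∨ (p.1 = p.2.1 + p.2.2))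
  have hglue := ie_glue
    ((univ : Finset (ZMod q × ZMod q × ZMod q)).filter (fun p =>
      p.1 ≠ 0 ∧ (p.2.1 ≠ 0 ∧ p.2.1 ≠ p.1) ∧ (p.2.2 ≠ 0 ∧ p.2.2 ≠ p.1 ∧ p.2.2 ≠ p.2.1)))
    (fun p => p.2.2 = p.1 + p.2.1) (fun p => p.2.1 = p.1 + p.2.2) (fun p => p.1 = p.2.1 + p.2.2)
  rw [filterN_eq] at hpart
  rw [cardD_eq] at hpart
  rw [cardAB_odd hodd, cardAC_odd hodd, cardBC_odd hodd, cardABC_odd hodd] at hglue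
  rw [cardC_eq_cardA, filterA_eq, filterB_eq, cardNA_odd hodd, cardNB_odd hodd] at hglue
  linarith [hpart, hglue]

private lemma cardNA_even (t : ZMod q) (ht0 : t ≠ 0) (htt : t + t = 0)
    (huniq : ∀ a : ZMod q, a + a = 0 → a ≠ 0 → a = t) :
    (univ.filter (fun p : ZMod q × ZMod q × ZMod q =>
        p.1 ≠ 0 ∧ (p.2.1 ≠ 0 ∧ p.2.1 ≠ p.1 ∧ p.2.1 ≠ -p.1) ∧ p.2.2 = p.1 + p.2.1)).card
    = (q - 2) + (q - 2) * (q - 3) := by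
  have hpart := Finset.card_filter_add_card_filter_not
    (s := (univ : Finset (ZMod q × ZMod q × ZMod q)).filter (fun p =>
        p.1 ≠ 0 ∧ (p.2.1 ≠ 0 ∧ p.2.1 ≠ p.1 ∧ p.2.1 ≠ -p.1) ∧ p.2.2 = p.1 + p.2.1))
    (p := fun p => p.1 = t)
  rw [Finset.filter_filter, Finset.filter_filter] at hpart
  have e1 : ((univ : Finset (ZMod q × ZMod q × ZMod q)).filter (fun p =>
      (p.1 ≠ 0 ∧ (p.2.1 ≠ 0 ∧ p.2.1 ≠ p.1 ∧ p.2.1 ≠ -p.1) ∧ p.2.2 = p.1 + p.2.1) ∧ p.1 = t))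
      = univ.filter (fun p : ZMod q × ZMod q × ZMod q =>
        p.1 = t ∧ (p.2.1 ≠ 0 ∧ p.2.1 ≠ t) ∧ p.2.2 = p.1 + p.2.1) := by
    apply Finset.filter_congr
    intro p _
    constructor
    · rintro ⟨⟨ha0, ⟨hb0, hba, hbna⟩, hpa⟩, hat⟩
      exact ⟨hat, ⟨hb0, fun h => hba (h.trans hat.symm)⟩, hpa⟩
    · rintro ⟨hat, ⟨hb0, hbt⟩, hpa⟩
      exact ⟨⟨by rw [hat]; exact ht0, ⟨hb0, fun h => hbt (h.trans hat),
        fun h => hbt (by linear_combination h - hat - htt)⟩, hpa⟩, hat⟩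
  have e2 : ((univ : Finset (ZMod q × ZMod q × ZMod q)).filter (fun p =>
      (p.1 ≠ 0 ∧ (p.2.1 ≠ 0 ∧ p.2.1 ≠ p.1 ∧ p.2.1 ≠ -p.1) ∧ p.2.2 = p.1 + p.2.1) ∧ ¬(p.1 = t)))
      = univ.filter (fun p : ZMod q × ZMod q × ZMod q =>
        (p.1 ≠ 0 ∧ p.1 ≠ t) ∧ (p.2.1 ≠ 0 ∧ p.2.1 ≠ p.1 ∧ p.2.1 ≠ -p.1) ∧ p.2.2 = p.1 + p.2.1) := by
    apply Finset.filter_congr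
    intro p _
    constructor
    · rintro ⟨⟨ha0, hQ, hpa⟩, hnat⟩
      exact ⟨⟨ha0, hnat⟩, hQ, hpa⟩
    · rintro ⟨⟨ha0, hnat⟩, hQ, hpa⟩
      exact ⟨⟨ha0, hQ, hpa⟩, hnat⟩
  rw [e1, e2] at hpart
  have c1 := card_dep_triple (P := fun a : ZMod q => a = t)
    (Q := fun _ b => b ≠ 0 ∧ b ≠ t) (R := fun a b c => c = a + b)
    (m := q - 2) (k := 1)
    (fun a _ => card_ne2 0 t (Ne.symm ht0))
    (fun a b _ _ => card_eq_one' (a + b))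
  rw [card_eq_one'] at c1
  have c2 := card_dep_triple (P := fun a : ZMod q => a ≠ 0 ∧ a ≠ t)
    (Q := fun a b => b ≠ 0 ∧ b ≠ a ∧ b ≠ -a) (R := fun a b c => c = a + b)
    (m := q - 3) (k := 1)
    (fun a ha => card_ne3 0 a (-a) (Ne.symm ha.1) (fun h => ha.1 (neg_eq_zero.mp h.symm))
      (fun h => ha.2 (huniq a (by linear_combination h) ha.1)))
    (fun a b _ _ => card_eq_one' (a + b))
  rw [card_ne2 0 t (Ne.symm ht0)] at c2
  rw [c1, c2] at hpart
  linarith [hpart]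

private lemma cardNB_even (t : ZMod q) (ht0 : t ≠ 0) (htt : t + t = 0)
    (huniq : ∀ a : ZMod q, a + a = 0 → a ≠ 0 → a = t) :
    (univ.filter (fun p : ZMod q × ZMod q × ZMod q =>
        p.1 ≠ 0 ∧ (p.2.1 ≠ 0 ∧ p.2.1 ≠ p.1 ∧ p.2.1 ≠ p.1 + p.1) ∧ p.2.2 = p.2.1 - p.1)).card
    = (q - 2) + (q - 2) * (q - 3) := by
  have hpart := Finset.card_filter_add_card_filter_not
    (s := (univ : Finset (ZMod q × ZMod q × ZMod q)).filter (fun p =>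
        p.1 ≠ 0 ∧ (p.2.1 ≠ 0 ∧ p.2.1 ≠ p.1 ∧ p.2.1 ≠ p.1 + p.1) ∧ p.2.2 = p.2.1 - p.1))
    (p := fun p => p.1 = t)
  rw [Finset.filter_filter, Finset.filter_filter] at hpart
  have e1 : ((univ : Finset (ZMod q × ZMod q × ZMod q)).filter (fun p =>
      (p.1 ≠ 0 ∧ (p.2.1 ≠ 0 ∧ p.2.1 ≠ p.1 ∧ p.2.1 ≠ p.1 + p.1) ∧ p.2.2 = p.2.1 - p.1) ∧ p.1 = t))
      = univ.filter (fun p : ZMod q × ZMod q × ZMod q =>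
        p.1 = t ∧ (p.2.1 ≠ 0 ∧ p.2.1 ≠ t) ∧ p.2.2 = p.2.1 - p.1) := by
    apply Finset.filter_congr
    intro p _
    constructor
    · rintro ⟨⟨ha0, ⟨hb0, hba, hbaa⟩, hr⟩, hat⟩
      exact ⟨hat, ⟨hb0, fun h => hba (h.trans hat.symm)⟩, hr⟩
    · rintro ⟨hat, ⟨hb0, hbt⟩, hr⟩
      exact ⟨⟨by rw [hat]; exact ht0, ⟨hb0, fun h => hbt (h.trans hat),
        fun h => hb0 (by linear_combination h + 2 * hat + htt)⟩, hr⟩, hat⟩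
  have e2 : ((univ : Finset (ZMod q × ZMod q × ZMod q)).filter (fun p =>
      (p.1 ≠ 0 ∧ (p.2.1 ≠ 0 ∧ p.2.1 ≠ p.1 ∧ p.2.1 ≠ p.1 + p.1) ∧ p.2.2 = p.2.1 - p.1) ∧ ¬(p.1 = t)))
      = univ.filter (fun p : ZMod q × ZMod q × ZMod q =>
        (p.1 ≠ 0 ∧ p.1 ≠ t) ∧ (p.2.1 ≠ 0 ∧ p.2.1 ≠ p.1 ∧ p.2.1 ≠ p.1 + p.1) ∧ p.2.2 = p.2.1 - p.1) := by
    apply Finset.filter_congr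
    intro p _
    constructor
    · rintro ⟨⟨ha0, hQ, hr⟩, hnat⟩
      exact ⟨⟨ha0, hnat⟩, hQ, hr⟩
    · rintro ⟨⟨ha0, hnat⟩, hQ, hr⟩
      exact ⟨⟨ha0, hQ, hr⟩, hnat⟩
  rw [e1, e2] at hpart
  have c1 := card_dep_triple (P := fun a : ZMod q => a = t)
    (Q := fun _ b => b ≠ 0 ∧ b ≠ t) (R := fun a b c => c = b - a)
    (m := q - 2) (k := 1)
    (fun a _ => card_ne2 0 t (Ne.symm ht0))
    (fun a b _ _ => card_eq_one' (b - a))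
  rw [card_eq_one'] at c1
  have c2 := card_dep_triple (P := fun a : ZMod q => a ≠ 0 ∧ a ≠ t)
    (Q := fun a b => b ≠ 0 ∧ b ≠ a ∧ b ≠ a + a) (R := fun a b c => c = b - a)
    (m := q - 3) (k := 1)
    (fun a ha => card_ne3 0 a (a + a) (Ne.symm ha.1) (fun h => ha.2 (huniq a h.symm ha.1))
      (fun h => ha.1 (by linear_combination -h)))
    (fun a b _ _ => card_eq_one' (b - a))
  rw [card_ne2 0 t (Ne.symm ht0)] at c2
  rw [c1, c2] at hpart
  linarith [hpart]

private lemma cardAB_even (t : ZMod q) (ht0 : t ≠ 0) (htt : t + t = 0)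
    (huniq : ∀ a : ZMod q, a + a = 0 → a ≠ 0 → a = t) :
    ((univ.filter (fun p : ZMod q × ZMod q × ZMod q =>
        p.1 ≠ 0 ∧ (p.2.1 ≠ 0 ∧ p.2.1 ≠ p.1) ∧ (p.2.2 ≠ 0 ∧ p.2.2 ≠ p.1 ∧ p.2.2 ≠ p.2.1))).filter
      (fun p => (p.2.2 = p.1 + p.2.1) ∧ (p.2.1 = p.1 + p.2.2))).card = q - 2 := by
  rw [Finset.filter_filter]
  have e : ((univ : Finset (ZMod q × ZMod q × ZMod q)).filter (fun p =>
      (p.1 ≠ 0 ∧ (p.2.1 ≠ 0 ∧ p.2.1 ≠ p.1) ∧ (p.2.2 ≠ 0 ∧ p.2.2 ≠ p.1 ∧ p.2.2 ≠ p.2.1)) ∧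
        (p.2.2 = p.1 + p.2.1) ∧ (p.2.1 = p.1 + p.2.2)))
      = univ.filter (fun p : ZMod q × ZMod q × ZMod q =>
        p.1 = t ∧ (p.2.1 ≠ 0 ∧ p.2.1 ≠ t) ∧ p.2.2 = p.1 + p.2.1) := by
    apply Finset.filter_congr
    intro p _
    constructor
    · rintro ⟨⟨ha0, ⟨hb0, hba⟩, hc0, hca, hcb⟩, hpa, hpb⟩
      have hat : p.1 = t := huniq p.1 (by linear_combination -hpa - hpb) ha0
      exact ⟨hat, ⟨hb0, fun h => hba (h.trans hat.symm)⟩, hpa⟩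
    · rintro ⟨hat, ⟨hb0, hbt⟩, hr⟩
      refine ⟨⟨by rw [hat]; exact ht0, ⟨hb0, fun h => hbt (h.trans hat)⟩, ?_, ?_, ?_⟩,
        hr, by linear_combination -hr - 2 * hat - htt⟩
      · intro h; exact hbt (by linear_combination h - hr - hat - htt)
      · intro h; exact hb0 (by linear_combination h - hr)
      · intro h; exact ht0 (by linear_combination (h - hr) - hat)
  rw [e]
  have c := card_dep_triple (P := fun a : ZMod q => a = t)
    (Q := fun _ b => b ≠ 0 ∧ b ≠ t) (R := fun a b c => c = a + b)
    (m := q - 2) (k := 1)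
    (fun a _ => card_ne2 0 t (Ne.symm ht0))
    (fun a b _ _ => card_eq_one' (a + b))
  rw [card_eq_one'] at c
  rw [c]; ring

private lemma cardAC_even (t : ZMod q) (ht0 : t ≠ 0) (htt : t + t = 0)
    (huniq : ∀ a : ZMod q, a + a = 0 → a ≠ 0 → a = t) :
    ((univ.filter (fun p : ZMod q × ZMod q × ZMod q =>
        p.1 ≠ 0 ∧ (p.2.1 ≠ 0 ∧ p.2.1 ≠ p.1) ∧ (p.2.2 ≠ 0 ∧ p.2.2 ≠ p.1 ∧ p.2.2 ≠ p.2.1))).filter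
      (fun p => (p.2.2 = p.1 + p.2.1) ∧ (p.1 = p.2.1 + p.2.2))).card = q - 2 := by
  rw [Finset.filter_filter]
  have e : ((univ : Finset (ZMod q × ZMod q × ZMod q)).filter (fun p =>
      (p.1 ≠ 0 ∧ (p.2.1 ≠ 0 ∧ p.2.1 ≠ p.1) ∧ (p.2.2 ≠ 0 ∧ p.2.2 ≠ p.1 ∧ p.2.2 ≠ p.2.1)) ∧
        (p.2.2 = p.1 + p.2.1) ∧ (p.1 = p.2.1 + p.2.2)))
      = univ.filter (fun p : ZMod q × ZMod q × ZMod q =>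
        (p.1 ≠ 0 ∧ p.1 ≠ t) ∧ (p.2.1 = t) ∧ p.2.2 = p.1 + p.2.1) := by
    apply Finset.filter_congr
    intro p _
    constructor
    · rintro ⟨⟨ha0, ⟨hb0, hba⟩, hc0, hca, hcb⟩, hpa, hpc⟩
      have hbt : p.2.1 = t := huniq p.2.1 (by linear_combination -hpa - hpc) hb0
      exact ⟨⟨ha0, fun h => hba (hbt.trans h.symm)⟩, hbt, hpa⟩
    · rintro ⟨⟨ha0, hat⟩, hbt, hr⟩
      refine ⟨⟨ha0, ⟨by rw [hbt]; exact ht0, fun h => hat (h.symm.trans hbt)⟩, ?_, ?_, ?_⟩,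
        hr, by linear_combination -hr - 2 * hbt - htt⟩
      · intro h; exact hat (by linear_combination h - hr - hbt - htt)
      · intro h; exact ht0 (by linear_combination (h - hr) - hbt)
      · intro h; exact ha0 (by linear_combination h - hr)
  rw [e]
  have c := card_dep_triple (P := fun a : ZMod q => a ≠ 0 ∧ a ≠ t)
    (Q := fun _ b => b = t) (R := fun a b c => c = a + b)
    (m := 1) (k := 1)
    (fun a _ => card_eq_one' t)
    (fun a b _ _ => card_eq_one' (a + b))
  rw [card_ne2 0 t (Ne.symm ht0)] at c
  rw [c]; ring

private lemma cardBC_even (t : ZMod q) (ht0 : t ≠ 0) (htt : t + t = 0)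
    (huniq : ∀ a : ZMod q, a + a = 0 → a ≠ 0 → a = t) :
    ((univ.filter (fun p : ZMod q × ZMod q × ZMod q =>
        p.1 ≠ 0 ∧ (p.2.1 ≠ 0 ∧ p.2.1 ≠ p.1) ∧ (p.2.2 ≠ 0 ∧ p.2.2 ≠ p.1 ∧ p.2.2 ≠ p.2.1))).filter
      (fun p => (p.2.1 = p.1 + p.2.2) ∧ (p.1 = p.2.1 + p.2.2))).card = q - 2 := by
  rw [Finset.filter_filter]
  have e : ((univ : Finset (ZMod q × ZMod q × ZMod q)).filter (fun p =>
      (p.1 ≠ 0 ∧ (p.2.1 ≠ 0 ∧ p.2.1 ≠ p.1) ∧ (p.2.2 ≠ 0 ∧ p.2.2 ≠ p.1 ∧ p.2.2 ≠ p.2.1)) ∧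
        (p.2.1 = p.1 + p.2.2) ∧ (p.1 = p.2.1 + p.2.2)))
      = univ.filter (fun p : ZMod q × ZMod q × ZMod q =>
        (p.1 ≠ 0 ∧ p.1 ≠ t) ∧ (p.2.1 = p.1 + t) ∧ p.2.2 = t) := by
    apply Finset.filter_congr
    intro p _
    constructor
    · rintro ⟨⟨ha0, ⟨hb0, hba⟩, hc0, hca, hcb⟩, hpb, hpc⟩
      have hct : p.2.2 = t := huniq p.2.2 (by linear_combination -hpb - hpc) hc0
      exact ⟨⟨ha0, fun h => hca (hct.trans h.symm)⟩, by linear_combination hpb + hct, hct⟩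
    · rintro ⟨⟨ha0, hat⟩, hb, hc⟩
      refine ⟨⟨ha0, ⟨?_, ?_⟩, by rw [hc]; exact ht0, fun h => hat (h.symm.trans hc), ?_⟩,
        by linear_combination hb - hc, by linear_combination -hb - hc - htt⟩
      · intro h; exact hat (by linear_combination h - hb - htt)
      · intro h; exact ht0 (by linear_combination h - hb)
      · intro h; exact ha0 (by linear_combination -hb - h + hc)
  rw [e]
  have c := card_dep_triple (P := fun a : ZMod q => a ≠ 0 ∧ a ≠ t)
    (Q := fun a b => b = a + t) (R := fun a b c => c = t)
    (m := 1) (k := 1)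
    (fun a _ => card_eq_one' (a + t))
    (fun a b _ _ => card_eq_one' t)
  rw [card_ne2 0 t (Ne.symm ht0)] at c
  rw [c]; ring

private lemma cardABC_even (t : ZMod q) (ht0 : t ≠ 0) (htt : t + t = 0)
    (huniq : ∀ a : ZMod q, a + a = 0 → a ≠ 0 → a = t) :
    ((univ.filter (fun p : ZMod q × ZMod q × ZMod q =>
        p.1 ≠ 0 ∧ (p.2.1 ≠ 0 ∧ p.2.1 ≠ p.1) ∧ (p.2.2 ≠ 0 ∧ p.2.2 ≠ p.1 ∧ p.2.2 ≠ p.2.1))).filter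
      (fun p => ((p.2.2 = p.1 + p.2.1) ∧ (p.2.1 = p.1 + p.2.2)) ∧ (p.1 = p.2.1 + p.2.2))).card
      = 0 := by
  rw [Finset.card_eq_zero, Finset.filter_eq_empty_iff]
  rintro p hp ⟨⟨hpa, hpb⟩, hpc⟩
  obtain ⟨ha0, ⟨hb0, hba⟩, -⟩ := (Finset.mem_filter.mp hp).2
  have hat : p.1 = t := huniq p.1 (by linear_combination -hpa - hpb) ha0
  have hbt : p.2.1 = t := huniq p.2.1 (by linear_combination -hpa - hpc) hb0
  exact hba (hbt.trans hat.symm)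

private lemma count_N_even (t : ZMod q) (ht0 : t ≠ 0) (htt : t + t = 0)
    (huniq : ∀ a : ZMod q, a + a = 0 → a ≠ 0 → a = t) :
    (univ.filter (fun p : ZMod q × ZMod q × ZMod q =>
        (p.1 ≠ 0 ∧ (p.2.1 ≠ 0 ∧ p.2.1 ≠ p.1) ∧ (p.2.2 ≠ 0 ∧ p.2.2 ≠ p.1 ∧ p.2.2 ≠ p.2.1)) ∧
        ¬(p.2.2 = p.1 + p.2.1) ∧ ¬(p.2.1 = p.1 + p.2.2) ∧ ¬(p.1 = p.2.1 + p.2.2))).card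
      + 3 * ((q - 2) + (q - 2) * (q - 3))
      = (q - 1) * ((q - 2) * (q - 3)) + 3 * (q - 2) := by
  have hpart := Finset.card_filter_add_card_filter_not
    (s := (univ : Finset (ZMod q × ZMod q × ZMod q)).filter (fun p =>
      p.1 ≠ 0 ∧ (p.2.1 ≠ 0 ∧ p.2.1 ≠ p.1) ∧ (p.2.2 ≠ 0 ∧ p.2.2 ≠ p.1 ∧ p.2.2 ≠ p.2.1)))
    (p := fun p => (p.2.2 = p.1 + p.2.1) ∨ (p.2.1 = p.1 + p.2.2) ∨ (p.1 = p.2.1 + p.2.2))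
  have hglue := ie_glue
    ((univ : Finset (ZMod q × ZMod q × ZMod q)).filter (fun p =>
      p.1 ≠ 0 ∧ (p.2.1 ≠ 0 ∧ p.2.1 ≠ p.1) ∧ (p.2.2 ≠ 0 ∧ p.2.2 ≠ p.1 ∧ p.2.2 ≠ p.2.1)))
    (fun p => p.2.2 = p.1 + p.2.1) (fun p => p.2.1 = p.1 + p.2.2) (fun p => p.1 = p.2.1 + p.2.2)
  rw [filterN_eq] at hpart
  rw [cardD_eq] at hpart
  rw [cardAB_even t ht0 htt huniq, cardAC_even t ht0 htt huniq, cardBC_even t ht0 htt huniq,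
    cardABC_even t ht0 htt huniq] at hglue
  rw [cardC_eq_cardA, filterA_eq, filterB_eq, cardNA_even t ht0 htt huniq,
    cardNB_even t ht0 htt huniq] at hglue
  linarith [hpart, hglue]

private def cInt (q : ℕ) : ℤ :=
  if q % 2 = 0 then (q : ℤ) * ((q : ℤ) - 2) * ((q : ℤ) - 3) * ((q : ℤ) - 4)
  else (q : ℤ) * ((q : ℤ) - 1) * ((q : ℤ) - 3) * ((q : ℤ) - 5)

private lemma cInt_even (n : ℕ) (h : n % 2 = 0) :
    cInt n = (n : ℤ) * ((n : ℤ) - 2) * ((n : ℤ) - 3) * ((n : ℤ) - 4) := by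
  unfold cInt; rw [if_pos h]

private lemma cInt_odd (n : ℕ) (h : ¬(n % 2 = 0)) :
    cInt n = (n : ℤ) * ((n : ℤ) - 1) * ((n : ℤ) - 3) * ((n : ℤ) - 5) := by
  unfold cInt; rw [if_neg h]

-- power series identity, given coefficients cInt
open PowerSeries in

private lemma ps_identity :
    (PowerSeries.mk cInt) * ((1 - PowerSeries.X) ^ 5 * (1 + PowerSeries.X) ^ 3) =
      PowerSeries.C (R := ℤ) 48 * PowerSeries.X ^ 6 * (PowerSeries.X + PowerSeries.C (R := ℤ) 3) := by
  have hterm : ∀ (a : ℤ) (k n : ℕ),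
      (PowerSeries.coeff (R := ℤ) n) (PowerSeries.mk cInt * (C (R := ℤ) a * X ^ k))
        = if k ≤ n then a * cInt (n - k) else 0 := by
    intro a k n
    rw [show PowerSeries.mk cInt * (C (R := ℤ) a * X ^ k) = C (R := ℤ) a * (PowerSeries.mk cInt * X ^ k) by
      ring, PowerSeries.coeff_C_mul, PowerSeries.coeff_mul_X_pow']
    split <;> simp [PowerSeries.coeff_mk]
  have hD : ((1 - X) ^ 5 * (1 + X) ^ 3 : PowerSeries ℤ) =
      C (R := ℤ) 1 * X ^ 0 + C (R := ℤ) (-2) * X ^ 1 + C (R := ℤ) (-2) * X ^ 2 + C (R := ℤ) 6 * X ^ 3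
        + C (R := ℤ) (-6) * X ^ 5 + C (R := ℤ) 2 * X ^ 6 + C (R := ℤ) 2 * X ^ 7 + C (R := ℤ) (-1) * X ^ 8 := by
    simp only [map_neg, map_one, map_ofNat]; ring
  have hR : (C (R := ℤ) 48 * X ^ 6 * (X + C (R := ℤ) 3) : PowerSeries ℤ)
      = C (R := ℤ) 48 * X ^ 7 + C (R := ℤ) 144 * X ^ 6 := by
    simp only [map_ofNat]; ring
  rw [hD, hR]
  ext n
  simp only [mul_add, map_add, hterm, PowerSeries.coeff_C_mul, PowerSeries.coeff_X_pow,
    mul_ite, mul_one, mul_zero]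
  rcases Nat.lt_or_ge n 8 with hn | hn
  · interval_cases n <;> norm_num [cInt]
  · obtain ⟨m, rfl⟩ : ∃ m, n = m + 8 := ⟨n - 8, by omega⟩
    rw [if_pos (show 0 ≤ m + 8 by omega), if_pos (show 1 ≤ m + 8 by omega),
      if_pos (show 2 ≤ m + 8 by omega), if_pos (show 3 ≤ m + 8 by omega),
      if_pos (show 5 ≤ m + 8 by omega), if_pos (show 6 ≤ m + 8 by omega),
      if_pos (show 7 ≤ m + 8 by omega), if_pos (show 8 ≤ m + 8 by omega),
      if_neg (show ¬(m + 8 = 7) by omega), if_neg (show ¬(m + 8 = 6) by omega)]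
    rw [show m + 8 - 0 = m + 8 from by omega, show m + 8 - 1 = m + 7 from by omega,
      show m + 8 - 2 = m + 6 from by omega, show m + 8 - 3 = m + 5 from by omega,
      show m + 8 - 5 = m + 3 from by omega, show m + 8 - 6 = m + 2 from by omega,
      show m + 8 - 7 = m + 1 from by omega, show m + 8 - 8 = m from by omega]
    rcases Nat.even_or_odd m with ⟨j, rfl⟩ | ⟨j, rfl⟩
    · rw [cInt_even (j + j + 8) (by omega), cInt_odd (j + j + 7) (by omega),
        cInt_even (j + j + 6) (by omega), cInt_odd (j + j + 5) (by omega),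
        cInt_odd (j + j + 3) (by omega), cInt_even (j + j + 2) (by omega),
        cInt_odd (j + j + 1) (by omega), cInt_even (j + j) (by omega)]
      push_cast
      ring
    · rw [cInt_odd (2 * j + 1 + 8) (by omega), cInt_even (2 * j + 1 + 7) (by omega),
        cInt_odd (2 * j + 1 + 6) (by omega), cInt_even (2 * j + 1 + 5) (by omega),
        cInt_even (2 * j + 1 + 3) (by omega), cInt_odd (2 * j + 1 + 2) (by omega),
        cInt_even (2 * j + 1 + 1) (by omega), cInt_odd (2 * j + 1) (by omega)]
      push_cast
      ring

private lemma main_count_s18 (q : ℕ) (hq : 1 ≤ q) :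
    (Nat.card {z : Fin 4 → ZMod q //
      (∀ i j : Fin 4, i < j → z i ≠ z j) ∧
      z 0 + z 1 ≠ z 2 + z 3 ∧ z 0 + z 2 ≠ z 1 + z 3 ∧ z 0 + z 3 ≠ z 1 + z 2} : ℤ) = cInt q := by
  haveI : NeZero q := ⟨by omega⟩
  rw [reduce q]
  rcases Nat.even_or_odd q with he | ho
  · obtain ⟨m, rfl⟩ : ∃ m, q = 2 * m + 2 := by
      obtain ⟨k, hk⟩ := he; exact ⟨k - 1, by omega⟩
    have h2 := count_N_even (q := 2 * m + 2) ((m + 1 : ℕ) : ZMod (2 * m + 2))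
      (t_ne_zero m) (t_add_t m) (fun a ha h0 => two_torsion_even m a ha h0)
    rw [cInt_even (2 * m + 2) (by omega)]
    rcases Nat.lt_or_ge m 2 with hm | hm
    · interval_cases m <;> omega
    · obtain ⟨l, rfl⟩ : ∃ l, m = l + 2 := ⟨m - 2, by omega⟩
      rw [show 2*(l+2)+2 - 1 = 2*l+5 from by omega, show 2*(l+2)+2 - 2 = 2*l+4 from by omega,
        show 2*(l+2)+2 - 3 = 2*l+3 from by omega] at h2
      have h2' := congrArg (fun x : ℕ => (x : ℤ)) h2
      push_cast at h2'
      push_cast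
      linear_combination (2*(l:ℤ)+6) * h2'
  · obtain ⟨k, rfl⟩ := ho
    have h2 := count_N_odd (q := 2 * k + 1) (fun a ha => two_torsion_odd k a ha)
    rw [cInt_odd (2 * k + 1) (by omega)]
    rcases Nat.lt_or_ge k 3 with hk | hk
    · interval_cases k <;> omega
    · obtain ⟨l, rfl⟩ : ∃ l, k = l + 3 := ⟨k - 3, by omega⟩
      rw [show 2*(l+3)+1 - 1 = 2*l+6 from by omega, show 2*(l+3)+1 - 2 = 2*l+5 from by omega,
        show 2*(l+3)+1 - 3 = 2*l+4 from by omega] at h2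
      have h2' := congrArg (fun x : ℕ => (x : ℤ)) h2
      push_cast at h2'
      push_cast
      linear_combination (2*(l:ℤ)+7) * h2'

/-- The generating function of the characteristic quasi-polynomial of the
mid-hyperplane arrangement `M_4`:
`Σ_{q≥1} χ_{M_4}(q) t^q = 48 t^6 (t + 3) / ((1 − t)^5 (1 + t)^3)`, stated here with
denominators cleared, as an identity of formal power series over `ℤ`. -/
theorem stmt_18 :
    (PowerSeries.mk fun q =>
        if q = 0 then 0 else
          (Nat.card {z : Fin 4 → ZMod q //
            (∀ i j : Fin 4, i < j → z i ≠ z j) ∧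
            z 0 + z 1 ≠ z 2 + z 3 ∧ z 0 + z 2 ≠ z 1 + z 3 ∧
              z 0 + z 3 ≠ z 1 + z 2} : ℤ)) *
        ((1 - PowerSeries.X) ^ 5 * (1 + PowerSeries.X) ^ 3) =
      PowerSeries.C (R := ℤ) 48 * PowerSeries.X ^ 6 *
        (PowerSeries.X + PowerSeries.C (R := ℤ) 3) := by
  have hmk : (PowerSeries.mk fun q =>
        if q = 0 then 0 else
          (Nat.card {z : Fin 4 → ZMod q //
            (∀ i j : Fin 4, i < j → z i ≠ z j) ∧
            z 0 + z 1 ≠ z 2 + z 3 ∧ z 0 + z 2 ≠ z 1 + z 3 ∧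
              z 0 + z 3 ≠ z 1 + z 2} : ℤ)) = PowerSeries.mk cInt := by
    ext n
    simp only [PowerSeries.coeff_mk]
    cases n with
    | zero => norm_num [cInt]
    | succ n =>
      rw [if_neg (Nat.succ_ne_zero n)]
      exact main_count_s18 (n + 1) (by omega)
  rw [hmk]
  exact ps_identity
end
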